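/- The (3,1) Springer variety, realized as X_{3,1} = S_a ∪ S_b ∪ S_c ⊆ (S²)^4 with S_a = {(x,x,−p,p)}, S_b = {(−p,x,x,p)}, S_c = {(−p,p,x,x)} for x ∈ S², is homotopy equivalent to a wedge of three 2-spheres; in particular S_a ∩ S_b = {(−p,−p,−p,p)}, S_b ∩ S_c = {(−p,p,p,p)}, and S_a ∩ S_c = ∅. -/

import Mathlib

/-- The north pole `p = (0,0,1)` of the unit two-sphere in `ℝ³`. -/
noncomputable def np : EuclideanSpace ℝ (Fin 3) := WithLp.toLp 2 ![0, 0, 1]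

/-- The component `S_a = {(x,x,-p,p)}` of `X_{3,1}`. -/
def Sa : Set (Fin 4 → EuclideanSpace ℝ (Fin 3)) :=
  {y | (∀ i, ‖y i‖ = 1) ∧ y 0 = y 1 ∧ y 2 = -np ∧ y 3 = np}

/-- The component `S_b = {(-p,x,x,p)}` of `X_{3,1}`. -/
def Sb : Set (Fin 4 → EuclideanSpace ℝ (Fin 3)) :=
  {y | (∀ i, ‖y i‖ = 1) ∧ y 0 = -np ∧ y 1 = y 2 ∧ y 3 = np}

/-- The component `S_c = {(-p,p,x,x)}` of `X_{3,1}`. -/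
def Sc : Set (Fin 4 → EuclideanSpace ℝ (Fin 3)) :=
  {y | (∀ i, ‖y i‖ = 1) ∧ y 0 = -np ∧ y 1 = np ∧ y 2 = y 3}

/-- The `(3,1)` Springer variety realized inside `(S²)^4`. -/
def X31 : Set (Fin 4 → EuclideanSpace ℝ (Fin 3)) := Sa ∪ Sb ∪ Sc

/-- The relation collapsing the three basepoints (north poles) of three disjoint
copies of the two-sphere; its quotient is the wedge of three 2-spheres. -/
def wedgeRel (x y : Fin 3 × ↥(Metric.sphere (0 : EuclideanSpace ℝ (Fin 3)) 1)) : Prop :=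
  (x.2 : EuclideanSpace ℝ (Fin 3)) = np ∧ (y.2 : EuclideanSpace ℝ (Fin 3)) = np

/-- The wedge of three 2-spheres. -/
def WedgeThreeSpheres : Type := Quot wedgeRel

noncomputable instance : TopologicalSpace WedgeThreeSpheres :=
  instTopologicalSpaceQuot


noncomputable section SpringerAux
namespace SpringerAux

open Set Metric

abbrev E3 := EuclideanSpace ℝ (Fin 3)

def V3 (a b c : ℝ) : E3 := WithLp.toLp 2 ![a, b, c]

@[simp] lemma V3_apply0 (a b c : ℝ) : V3 a b c 0 = a := rfl
@[simp] lemma V3_apply1 (a b c : ℝ) : V3 a b c 1 = b := rfl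
@[simp] lemma V3_apply2 (a b c : ℝ) : V3 a b c 2 = c := rfl

@[simp] lemma np_apply0 : np 0 = 0 := rfl
@[simp] lemma np_apply1 : np 1 = 0 := rfl
@[simp] lemma np_apply2 : np 2 = 1 := rfl

lemma E3_ext {x y : E3} (h0 : x 0 = y 0) (h1 : x 1 = y 1) (h2 : x 2 = y 2) : x = y := by
  ext i
  match i with
  | ⟨0, _⟩ => exact h0
  | ⟨1, _⟩ => exact h1
  | ⟨2, _⟩ => exact h2

def nsq (x : E3) : ℝ := x 0 ^ 2 + x 1 ^ 2 + x 2 ^ 2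

lemma norm_sq_eq (x : E3) : ‖x‖ ^ 2 = nsq x := by
  rw [EuclideanSpace.norm_eq, Real.sq_sqrt (by positivity)]
  simp [nsq, Fin.sum_univ_three, sq_abs]

lemma norm_eq_one_iff {x : E3} : ‖x‖ = 1 ↔ nsq x = 1 := by
  constructor
  · intro h; rw [← norm_sq_eq, h]; norm_num
  · intro h; nlinarith [norm_nonneg x, norm_sq_eq x]

lemma nsq_np : nsq np = 1 := by simp [nsq]

lemma norm_np : ‖np‖ = 1 := norm_eq_one_iff.2 nsq_np

lemma continuous_V3 {X : Type*} [TopologicalSpace X] {f g h : X → ℝ}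
    (hf : Continuous f) (hg : Continuous g) (hh : Continuous h) :
    Continuous fun x => V3 (f x) (g x) (h x) := by
  have hp : Continuous fun x => (![f x, g x, h x] : Fin 3 → ℝ) := by
    apply continuous_pi
    intro i
    match i with
    | ⟨0, _⟩ => exact hf
    | ⟨1, _⟩ => exact hg
    | ⟨2, _⟩ => exact hh
  exact (PiLp.continuous_toLp (p := 2) (β := fun _ : Fin 3 => ℝ)).comp hp

@[continuity, fun_prop] lemma continuous_coord (i : Fin 3) : Continuous fun x : E3 => x i :=
  (continuous_apply i).comp (EuclideanSpace.equiv (Fin 3) ℝ).continuous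

end SpringerAux

namespace SpringerAux
open Set Metric

/-! ### Basic maps on `E3` -/

def rh (x : E3) : E3 := V3 (-(x 0)) (x 1) (-(x 2))
def Rl (x : E3) : E3 := V3 (x 2) (x 1) (-(x 0))
def wrapb (x : E3) : E3 := V3 (2*x 0*x 2) (-(2*x 0*x 1)) (1-2*(x 0)^2)
def uW (x : E3) : E3 := if 0 ≤ x 0 then V3 (2*(x 0)^2-1) (2*x 0*x 1) (2*x 0*x 2) else V3 (-1) 0 0
def uC (x : E3) : E3 := if x 0 ≤ 0 then V3 (1-2*(x 0)^2) (-(2*x 0*x 1)) (-(2*x 0*x 2)) else V3 1 0 0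
def mW (x : E3) : E3 := Rl (uW x)
def mC (x : E3) : E3 := Rl (uC x)
def dl (x : E3) : E3 := V3 (-(2*x 2*x 0)) (-(2*x 2*x 1)) (1-2*(x 2)^2)
def dlT (x : E3) : E3 := if 0 ≤ x 2 then np else dl x
def om (t : ℝ) : E3 := V3 (2*t*(1-t)/(t^2+(1-t)^2)) 0 ((2*t-1)/(t^2+(1-t)^2))
def cpath (s : ℝ) : E3 := om (min 1 (2-2*s))

lemma neg_np_eq : (-np : E3) = V3 0 0 (-1) := by
  apply E3_ext <;> simp [PiLp.neg_apply]

@[simp] lemma neg_np_apply0 : (-np : E3) 0 = 0 := by rw [neg_np_eq]; simp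
@[simp] lemma neg_np_apply1 : (-np : E3) 1 = 0 := by rw [neg_np_eq]; simp
@[simp] lemma neg_np_apply2 : (-np : E3) 2 = -1 := by rw [neg_np_eq]; simp

lemma np_eq_V3 : (np : E3) = V3 0 0 1 := rfl

/-! ### Unit-norm preservation -/

lemma om_denom_pos (t : ℝ) : 0 < t^2+(1-t)^2 := by nlinarith [sq_nonneg t, sq_nonneg (1-t), sq_nonneg (2*t-1)]

lemma nsq_rh {x : E3} (hx : nsq x = 1) : nsq (rh x) = 1 := by
  simp only [nsq, rh, V3_apply0, V3_apply1, V3_apply2] at *; ring_nf; ring_nf at hx; linarith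

lemma nsq_Rl {x : E3} (hx : nsq x = 1) : nsq (Rl x) = 1 := by
  simp only [nsq, Rl, V3_apply0, V3_apply1, V3_apply2] at *; ring_nf; ring_nf at hx; linarith

lemma nsq_wrapb {x : E3} (hx : nsq x = 1) : nsq (wrapb x) = 1 := by
  simp only [nsq, wrapb, V3_apply0, V3_apply1, V3_apply2] at *
  linear_combination (4*(x 0)^2) * hx

lemma nsq_uW {x : E3} (hx : nsq x = 1) : nsq (uW x) = 1 := by
  unfold uW; split_ifs
  · simp only [nsq, V3_apply0, V3_apply1, V3_apply2] at *
    linear_combination (4*(x 0)^2) * hx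
  · simp [nsq]

lemma nsq_uC {x : E3} (hx : nsq x = 1) : nsq (uC x) = 1 := by
  unfold uC; split_ifs
  · simp only [nsq, V3_apply0, V3_apply1, V3_apply2] at *
    linear_combination (4*(x 0)^2) * hx
  · simp [nsq]

lemma nsq_mW {x : E3} (hx : nsq x = 1) : nsq (mW x) = 1 := nsq_Rl (nsq_uW hx)
lemma nsq_mC {x : E3} (hx : nsq x = 1) : nsq (mC x) = 1 := nsq_Rl (nsq_uC hx)

lemma nsq_dl {x : E3} (hx : nsq x = 1) : nsq (dl x) = 1 := by
  simp only [nsq, dl, V3_apply0, V3_apply1, V3_apply2] at *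
  linear_combination (4*(x 2)^2) * hx

lemma nsq_dlT {x : E3} (hx : nsq x = 1) : nsq (dlT x) = 1 := by
  unfold dlT; split_ifs
  · exact nsq_np
  · exact nsq_dl hx

lemma nsq_om (t : ℝ) : nsq (om t) = 1 := by
  have h := om_denom_pos t
  simp only [nsq, om, V3_apply0, V3_apply1, V3_apply2]
  field_simp
  ring

lemma nsq_cpath (s : ℝ) : nsq (cpath s) = 1 := nsq_om _

lemma om_zero : om 0 = -np := by
  rw [neg_np_eq]; unfold om; norm_num

lemma om_one : om 1 = np := by
  rw [np_eq_V3]; unfold om; norm_num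

/-! ### Non-antipodality -/

lemma uW_ne {x : E3} (hx : nsq x = 1) : uW x ≠ -x := by
  intro h
  unfold uW at h; split_ifs at h with hc
  · have h0 := congrFun (congrArg WithLp.ofLp h) 0
    have h1 := congrFun (congrArg WithLp.ofLp h) 1
    have h2 := congrFun (congrArg WithLp.ofLp h) 2
    simp only [V3_apply0, V3_apply1, V3_apply2, PiLp.neg_apply] at h0 h1 h2
    have hx1 : x 1 = 0 := by
      have : x 1 * (2*x 0 + 1) = 0 := by linarith [h1]; 
      rcases mul_eq_zero.1 this with h' | h'
      · exact h'
      · nlinarith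
    have hx2 : x 2 = 0 := by
      have : x 2 * (2*x 0 + 1) = 0 := by linarith [h2]
      rcases mul_eq_zero.1 this with h' | h'
      · exact h'
      · nlinarith
    simp only [nsq, hx1, hx2] at hx
    nlinarith
  · have h0 := congrFun (congrArg WithLp.ofLp h) 0
    simp only [V3_apply0, PiLp.neg_apply] at h0
    push_neg at hc; nlinarith

lemma uC_ne {x : E3} (hx : nsq x = 1) : uC x ≠ -x := by
  intro h
  unfold uC at h; split_ifs at h with hc
  · have h0 := congrFun (congrArg WithLp.ofLp h) 0
    have h1 := congrFun (congrArg WithLp.ofLp h) 1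
    have h2 := congrFun (congrArg WithLp.ofLp h) 2
    simp only [V3_apply0, V3_apply1, V3_apply2, PiLp.neg_apply] at h0 h1 h2
    have hx1 : x 1 = 0 := by
      have : x 1 * (2*x 0 - 1) = 0 := by linarith [h1]
      rcases mul_eq_zero.1 this with h' | h'
      · exact h'
      · nlinarith
    have hx2 : x 2 = 0 := by
      have : x 2 * (2*x 0 - 1) = 0 := by linarith [h2]
      rcases mul_eq_zero.1 this with h' | h'
      · exact h'
      · nlinarith
    simp only [nsq, hx1, hx2] at hx
    nlinarith
  · have h0 := congrFun (congrArg WithLp.ofLp h) 0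
    simp only [V3_apply0, PiLp.neg_apply] at h0
    push_neg at hc; nlinarith

lemma Rl_ne {x : E3} (hx : nsq x = 1) : Rl x ≠ -x := by
  intro h
  have h0 := congrFun (congrArg WithLp.ofLp h) 0
  have h1 := congrFun (congrArg WithLp.ofLp h) 1
  have h2 := congrFun (congrArg WithLp.ofLp h) 2
  simp only [Rl, V3_apply0, V3_apply1, V3_apply2, PiLp.neg_apply] at h0 h1 h2
  simp only [nsq] at hx
  nlinarith

lemma dlT_ne {x : E3} (hx : nsq x = 1) : dlT x ≠ -x := by
  intro h
  unfold dlT at h; split_ifs at h with hc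
  · have h2 := congrFun (congrArg WithLp.ofLp h) 2
    simp only [np_apply2, PiLp.neg_apply] at h2
    nlinarith
  · push_neg at hc
    have h0 := congrFun (congrArg WithLp.ofLp h) 0
    have h1 := congrFun (congrArg WithLp.ofLp h) 1
    have h2 := congrFun (congrArg WithLp.ofLp h) 2
    simp only [dl, V3_apply0, V3_apply1, V3_apply2, PiLp.neg_apply] at h0 h1 h2
    have hx2 : x 2 = -(1/2) := by nlinarith
    have hx0 : x 0 = 0 := by
      have : x 0 * (2*x 2 - 1) = 0 := by linarith [h0]
      rcases mul_eq_zero.1 this with h' | h'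
      · exact h'
      · nlinarith
    have hx1 : x 1 = 0 := by
      have : x 1 * (2*x 2 - 1) = 0 := by linarith [h1]
      rcases mul_eq_zero.1 this with h' | h'
      · exact h'
      · nlinarith
    simp only [nsq, hx0, hx1, hx2] at hx
    nlinarith

lemma Rl_neg (x : E3) : Rl (-x) = -Rl x := by
  apply E3_ext <;> simp [Rl, PiLp.neg_apply] <;> ring

lemma Rl_inj {x y : E3} (h : Rl x = Rl y) : x = y := by
  have h0 := congrFun (congrArg WithLp.ofLp h) 0
  have h1 := congrFun (congrArg WithLp.ofLp h) 1
  have h2 := congrFun (congrArg WithLp.ofLp h) 2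
  simp only [Rl, V3_apply0, V3_apply1, V3_apply2] at h0 h1 h2
  apply E3_ext <;> [skip; exact h1; exact h0] <;> linarith

lemma mW_ne {x : E3} (hx : nsq x = 1) : mW x ≠ -Rl x := by
  intro h; rw [mW, ← Rl_neg] at h; exact uW_ne hx (Rl_inj h)

lemma mC_ne {x : E3} (hx : nsq x = 1) : mC x ≠ -Rl x := by
  intro h; rw [mC, ← Rl_neg] at h; exact uC_ne hx (Rl_inj h)

/-! ### Continuity -/

lemma continuous_rh : Continuous rh :=
  continuous_V3 ((continuous_coord 0).neg) (continuous_coord 1) ((continuous_coord 2).neg)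

lemma continuous_Rl : Continuous Rl :=
  continuous_V3 (continuous_coord 2) (continuous_coord 1) ((continuous_coord 0).neg)

lemma contc (i : Fin 3) : Continuous fun x : E3 => x i := continuous_coord i

lemma continuous_wrapb : Continuous wrapb := by
  apply continuous_V3
  · exact (continuous_const.mul (contc 0)).mul (contc 2)
  · exact ((continuous_const.mul (contc 0)).mul (contc 1)).neg
  · exact continuous_const.sub (continuous_const.mul ((contc 0).pow 2))

lemma continuous_uW : Continuous uW := by
  unfold uW
  apply Continuous.if_le _ _ continuous_const (continuous_coord 0)
  · intro x hx
    have hx0 : x 0 = 0 := hx.symm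
    simp [hx0]
  · apply continuous_V3
    · exact (continuous_const.mul ((contc 0).pow 2)).sub continuous_const
    · exact (continuous_const.mul (contc 0)).mul (contc 1)
    · exact (continuous_const.mul (contc 0)).mul (contc 2)
  · exact continuous_const

lemma continuous_uC : Continuous uC := by
  unfold uC
  apply Continuous.if_le _ _ (continuous_coord 0) continuous_const
  · intro x hx
    simp [hx]
  · apply continuous_V3
    · exact continuous_const.sub (continuous_const.mul ((contc 0).pow 2))
    · exact ((continuous_const.mul (contc 0)).mul (contc 1)).neg
    · exact ((continuous_const.mul (contc 0)).mul (contc 2)).neg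
  · exact continuous_const

lemma continuous_mW : Continuous mW := continuous_Rl.comp continuous_uW
lemma continuous_mC : Continuous mC := continuous_Rl.comp continuous_uC

lemma continuous_dl : Continuous dl := by
  apply continuous_V3
  · exact ((continuous_const.mul (contc 2)).mul (contc 0)).neg
  · exact ((continuous_const.mul (contc 2)).mul (contc 1)).neg
  · exact continuous_const.sub (continuous_const.mul ((contc 2).pow 2))

lemma continuous_dlT : Continuous dlT := by
  unfold dlT
  apply Continuous.if_le continuous_const continuous_dl continuous_const (continuous_coord 2)
  intro x hx
  apply E3_ext <;> simp [dl, ← hx] <;> norm_num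

lemma continuous_om : Continuous om := by
  unfold om
  apply continuous_V3
  · exact Continuous.div (by continuity) (by continuity) (fun t => (om_denom_pos t).ne')
  · exact continuous_const
  · exact Continuous.div (by continuity) (by continuity) (fun t => (om_denom_pos t).ne')

lemma continuous_cpath : Continuous cpath :=
  continuous_om.comp (continuous_const.min (by continuity))

end SpringerAux

namespace SpringerAux
open Set Metric

/-! ### Normalization, reflections, rotation correction -/

def nz (z : E3) : E3 := ‖z‖⁻¹ • z
def dot (v x : E3) : ℝ := v 0 * x 0 + v 1 * x 1 + v 2 * x 2
def rfl3 (v x : E3) : E3 := x - (2 * dot v x) • v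
def Qc (v q x : E3) : E3 := rfl3 (nz (v + q)) (rfl3 v x)
def geo (f g : E3 → E3) (t : ℝ) (x : E3) : E3 := nz ((1-t) • f x + t • g x)

lemma nz_apply (z : E3) (i : Fin 3) : nz z i = ‖z‖⁻¹ * z i := by
  simp [nz, PiLp.smul_apply]

lemma norm_eq_sqrt_nsq (x : E3) : ‖x‖ = Real.sqrt (nsq x) := by
  rw [EuclideanSpace.norm_eq]
  congr 1
  simp [nsq, Fin.sum_univ_three, sq_abs]

lemma nsq_pos_of_ne {z : E3} (h : z ≠ 0) : 0 < nsq z := by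
  have := norm_pos_iff.2 h
  nlinarith [norm_sq_eq z]

lemma ne_zero_of_nsq_one {z : E3} (h : nsq z = 1) : z ≠ 0 := by
  intro h0; rw [h0] at h; simp [nsq] at h

lemma nz_unit_nsq {z : E3} (hz : z ≠ 0) : nsq (nz z) = 1 := by
  have hn : ‖z‖ ≠ 0 := norm_ne_zero_iff.2 hz
  rw [← norm_eq_one_iff]
  rw [nz, norm_smul, norm_inv, norm_norm]
  field_simp

lemma nz_of_nsq_one {z : E3} (hz : nsq z = 1) : nz z = z := by
  have : ‖z‖ = 1 := norm_eq_one_iff.2 hz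
  rw [nz, this]; simp

lemma nz_neg (z : E3) : nz (-z) = -nz z := by
  simp [nz, smul_neg]

lemma rfl3_neg (v x : E3) : rfl3 v (-x) = -rfl3 v x := by
  apply E3_ext <;>
    simp only [rfl3, dot, PiLp.sub_apply, PiLp.smul_apply, PiLp.neg_apply, smul_eq_mul] <;> ring

lemma rfl3_self {v : E3} (hv : nsq v = 1) : rfl3 v v = -v := by
  unfold nsq at hv
  apply E3_ext <;>
    simp only [rfl3, dot, PiLp.sub_apply, PiLp.smul_apply, PiLp.neg_apply, smul_eq_mul]
  · linear_combination (-2 * v 0) * hv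
  · linear_combination (-2 * v 1) * hv
  · linear_combination (-2 * v 2) * hv

lemma rfl3_invol {v : E3} (hv : nsq v = 1) (x : E3) : rfl3 v (rfl3 v x) = x := by
  unfold nsq at hv
  apply E3_ext <;>
    simp only [rfl3, dot, PiLp.sub_apply, PiLp.smul_apply, smul_eq_mul]
  · linear_combination (4 * (v 0*x 0+v 1*x 1+v 2*x 2) * v 0) * hv
  · linear_combination (4 * (v 0*x 0+v 1*x 1+v 2*x 2) * v 1) * hv
  · linear_combination (4 * (v 0*x 0+v 1*x 1+v 2*x 2) * v 2) * hv

lemma nsq_rfl3 {v : E3} (hv : nsq v = 1) (x : E3) : nsq (rfl3 v x) = nsq x := by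
  unfold nsq at hv ⊢
  simp only [rfl3, dot, PiLp.sub_apply, PiLp.smul_apply, smul_eq_mul]
  linear_combination (4 * (v 0*x 0+v 1*x 1+v 2*x 2)^2) * hv

lemma rfl3_smul (c : ℝ) (v x : E3) : rfl3 (c • v) x = x - (2*c^2*dot v x) • v := by
  apply E3_ext <;>
    simp only [rfl3, dot, PiLp.sub_apply, PiLp.smul_apply, smul_eq_mul] <;> ring

lemma rfl3_nz_eq {v : E3} (hv : v ≠ 0) (x : E3) :
    rfl3 (nz v) x = x - (2 * dot v x / nsq v) • v := by
  rw [nz, rfl3_smul]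
  congr 1
  have h2 : (‖v‖⁻¹)^2 = (nsq v)⁻¹ := by
    rw [← norm_sq_eq]; simp [pow_two, mul_inv]
  rw [h2]; field_simp

lemma Qc_eq {v q : E3} (h : v + q ≠ 0) (x : E3) :
    Qc v q x = rfl3 v x - (2 * dot (v+q) (rfl3 v x) / nsq (v+q)) • (v+q) := by
  rw [Qc, rfl3_nz_eq h]

lemma Qc_neg (v q x : E3) : Qc v q (-x) = -Qc v q x := by
  rw [Qc, Qc, rfl3_neg, rfl3_neg]

lemma nsq_Qc {v q : E3} (hv : nsq v = 1) (h : v + q ≠ 0) (x : E3) :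
    nsq (Qc v q x) = nsq x := by
  rw [Qc, nsq_rfl3 (nz_unit_nsq h), nsq_rfl3 hv]

lemma Qc_self {v q : E3} (hv : nsq v = 1) (hq : nsq q = 1) (h : v + q ≠ 0) :
    Qc v q v = q := by
  have hd : dot (v+q) (rfl3 v v) = -(1 + dot v q) := by
    rw [rfl3_self hv]
    unfold nsq at hv
    simp only [dot, PiLp.add_apply, PiLp.neg_apply]
    linear_combination (-1 : ℝ) * hv
  have hnu : nsq (v+q) = 2*(1 + dot v q) := by
    unfold nsq at hv hq ⊢
    simp only [dot, PiLp.add_apply]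
    linear_combination hv + hq
  have hpos : (0:ℝ) < 2*(1 + dot v q) := by
    rw [← hnu]; exact nsq_pos_of_ne h
  have hne : (1 + dot v q) ≠ 0 := by nlinarith
  rw [Qc_eq h, hd, hnu, rfl3_self hv]
  have hs : 2 * -(1 + dot v q) / (2*(1 + dot v q)) = -1 := by field_simp
  rw [hs]
  module

lemma Qc_id {v : E3} (hv : nsq v = 1) (x : E3) : Qc v v x = x := by
  have hvne : v ≠ 0 := ne_zero_of_nsq_one hv
  have h : v + v ≠ 0 := by
    intro h0
    apply hvne
    have h2 : (2:ℝ) • v = 0 := by rw [two_smul]; exact h0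
    rcases smul_eq_zero.1 h2 with h' | h'
    · norm_num at h'
    · exact h'
  have h4 : nsq (v+v) = 4 := by
    unfold nsq at hv ⊢; simp only [PiLp.add_apply]; linear_combination 4*hv
  rw [Qc_eq h, h4]
  have : rfl3 v x - (2 * dot (v+v) (rfl3 v x) / 4) • (v+v) = rfl3 v (rfl3 v x) := by
    apply E3_ext <;>
      simp only [rfl3, dot, PiLp.sub_apply, PiLp.add_apply, PiLp.smul_apply, smul_eq_mul] <;>
      ring
  rw [this, rfl3_invol hv]

/-- The key track computation for the chain-side middle-sphere homotopy. -/
lemma track {a b : ℝ} (hab : a^2+b^2 = 1) (ha : 0 ≤ a) :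
    Qc (V3 (-b) 0 (-a)) (-np) (V3 b 0 (-a)) = V3 (2*a*b) 0 (b^2-a^2) := by
  have hu : V3 (-b) 0 (-a) + -np = V3 (-b) 0 (-a-1) := by
    apply E3_ext <;> simp [PiLp.add_apply] <;> ring
  have hnu : nsq (V3 (-b) 0 (-a-1)) = 2+2*a := by
    unfold nsq; simp only [V3_apply0, V3_apply1, V3_apply2]
    linear_combination hab
  have hune : V3 (-b) 0 (-a) + -np ≠ 0 := by
    rw [hu]
    intro h0
    have : nsq (V3 (-b) 0 (-a-1)) = 0 := by rw [h0]; simp [nsq, PiLp.zero_apply]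
    rw [hnu] at this; linarith
  have hy : rfl3 (V3 (-b) 0 (-a)) (V3 b 0 (-a)) = V3 (b*(3*a^2-b^2)) 0 (a*(a^2-3*b^2)) := by
    apply E3_ext <;>
      simp only [rfl3, dot, V3_apply0, V3_apply1, V3_apply2, PiLp.sub_apply,
        PiLp.smul_apply, smul_eq_mul]
    · linear_combination (-b) * hab
    · ring
    · linear_combination a * hab
  have hdot : dot (V3 (-b) 0 (-a-1)) (V3 (b*(3*a^2-b^2)) 0 (a*(a^2-3*b^2)))
      = -(1+a)*(4*a^2-2*a-1) := by
    simp only [dot, V3_apply0, V3_apply1, V3_apply2]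
    linear_combination (-(a^2) + 3*a + b^2 + 1) * hab
  have hs : 2 * (-(1+a)*(4*a^2-2*a-1)) / (2+2*a) = -(4*a^2-2*a-1) := by
    have : (2:ℝ)+2*a ≠ 0 := by nlinarith
    field_simp
  rw [Qc_eq hune, hy, hu, hnu, hdot, hs]
  apply E3_ext <;>
    simp only [V3_apply0, V3_apply1, V3_apply2, PiLp.sub_apply, PiLp.smul_apply, smul_eq_mul]
  · linear_combination (-b) * hab
  · ring
  · linear_combination (-3*a - 1) * hab

/-! ### Geodesic homotopies -/

lemma geo_ne_zero {v w : E3} (hv : nsq v = 1) (hw : nsq w = 1) (hne : v ≠ -w)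
    {t : ℝ} (ht0 : 0 ≤ t) (ht1 : t ≤ 1) : (1-t) • v + t • w ≠ 0 := by
  intro h
  have hv1 : ‖v‖ = 1 := norm_eq_one_iff.2 hv
  have hw1 : ‖w‖ = 1 := norm_eq_one_iff.2 hw
  have e : (1-t) • v = t • (-w) := by
    rw [smul_neg]
    exact eq_neg_of_add_eq_zero_left h
  have en : |1-t| * ‖v‖ = |t| * ‖-w‖ := by
    rw [← Real.norm_eq_abs, ← Real.norm_eq_abs, ← norm_smul, ← norm_smul, e]
  rw [hv1, norm_neg, hw1, mul_one, mul_one, abs_of_nonneg (by linarith), abs_of_nonneg ht0] at en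
  have hvw : (1-t) • v + t • w = t • (v+w) := by rw [smul_add, en]
  rw [hvw] at h
  rcases smul_eq_zero.1 h with h' | h'
  · linarith
  · exact hne (eq_neg_of_add_eq_zero_left h')

lemma nsq_geo {f g : E3 → E3} {x : E3} (h : (1-t') • f x + t' • g x ≠ 0) :
    nsq (geo f g t' x) = 1 := nz_unit_nsq h

lemma geo_zero {f g : E3 → E3} {x : E3} (hf : nsq (f x) = 1) : geo f g 0 x = f x := by
  rw [geo]
  norm_num
  exact nz_of_nsq_one hf

lemma geo_one {f g : E3 → E3} {x : E3} (hg : nsq (g x) = 1) : geo f g 1 x = g x := by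
  rw [geo]
  norm_num
  exact nz_of_nsq_one hg

lemma geo_of_eq {f g : E3 → E3} {x : E3} (h : f x = g x) (hf : nsq (f x) = 1) (t : ℝ) :
    geo f g t x = f x := by
  rw [geo, ← h]
  have : (1-t) • f x + t • f x = f x := by module
  rw [this, nz_of_nsq_one hf]

/-! ### Continuity of the combinators -/

lemma continuous_nz_comp {X : Type*} [TopologicalSpace X] {f : X → E3}
    (hf : Continuous f) (hne : ∀ p, f p ≠ 0) : Continuous fun p => nz (f p) := by
  exact ((continuous_norm.comp hf).inv₀ fun p => norm_ne_zero_iff.2 (hne p)).smul hf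

lemma continuous_dot_comp {X : Type*} [TopologicalSpace X] {f g : X → E3}
    (hf : Continuous f) (hg : Continuous g) : Continuous fun p => dot (f p) (g p) := by
  show Continuous fun p => (f p 0)*(g p 0) + (f p 1)*(g p 1) + (f p 2)*(g p 2)
  have c : ∀ (i : Fin 3) {h : X → E3}, Continuous h → Continuous fun p => h p i :=
    fun i h hh => (continuous_coord i).comp hh
  exact (((c 0 hf).mul (c 0 hg)).add ((c 1 hf).mul (c 1 hg))).add ((c 2 hf).mul (c 2 hg))

lemma continuous_rfl3_comp {X : Type*} [TopologicalSpace X] {f g : X → E3}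
    (hf : Continuous f) (hg : Continuous g) : Continuous fun p => rfl3 (f p) (g p) := by
  unfold rfl3
  exact hg.sub ((continuous_const.mul (continuous_dot_comp hf hg)).smul hf)

lemma continuous_Qc_comp {X : Type*} [TopologicalSpace X] {f g : X → E3} {q : E3}
    (hf : Continuous f) (hg : Continuous g) (hne : ∀ p, f p + q ≠ 0) :
    Continuous fun p => Qc (f p) q (g p) := by
  unfold Qc
  exact continuous_rfl3_comp (continuous_nz_comp (hf.add continuous_const) hne)
    (continuous_rfl3_comp hf hg)

lemma continuous_geo_comp {X : Type*} [TopologicalSpace X] {f g : E3 → E3} {τ : X → ℝ}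
    {ξ : X → E3} (hf : Continuous f) (hg : Continuous g) (hτ : Continuous τ) (hξ : Continuous ξ)
    (hne : ∀ p, (1 - τ p) • f (ξ p) + τ p • g (ξ p) ≠ 0) :
    Continuous fun p => geo f g (τ p) (ξ p) := by
  unfold geo
  exact continuous_nz_comp
    (((continuous_const.sub hτ).smul (hf.comp hξ)).add (hτ.smul (hg.comp hξ))) hne

end SpringerAux

namespace SpringerAux
open Set Metric

/-! ### The wedge model in `E3` and the parametrizations -/

def S1 : Set E3 := Metric.sphere np 1
def S2 : Set E3 := Metric.sphere ((2:ℝ)•np) 2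
def S3 : Set E3 := Metric.sphere ((3:ℝ)•np) 3
def WS : Set E3 := S1 ∪ S2 ∪ S3

def Phi0 (z : E3) : Fin 4 → E3 := ![z, z, -np, np]
def Phi1 (z : E3) : Fin 4 → E3 := ![-np, z, z, np]
def Phi2 (z : E3) : Fin 4 → E3 := ![-np, np, z, z]

@[simp] lemma Phi0_0 (z : E3) : Phi0 z 0 = z := rfl
@[simp] lemma Phi0_1 (z : E3) : Phi0 z 1 = z := rfl
@[simp] lemma Phi0_2 (z : E3) : Phi0 z 2 = -np := rfl
@[simp] lemma Phi0_3 (z : E3) : Phi0 z 3 = np := rfl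
@[simp] lemma Phi1_0 (z : E3) : Phi1 z 0 = -np := rfl
@[simp] lemma Phi1_1 (z : E3) : Phi1 z 1 = z := rfl
@[simp] lemma Phi1_2 (z : E3) : Phi1 z 2 = z := rfl
@[simp] lemma Phi1_3 (z : E3) : Phi1 z 3 = np := rfl
@[simp] lemma Phi2_0 (z : E3) : Phi2 z 0 = -np := rfl
@[simp] lemma Phi2_1 (z : E3) : Phi2 z 1 = np := rfl
@[simp] lemma Phi2_2 (z : E3) : Phi2 z 2 = z := rfl
@[simp] lemma Phi2_3 (z : E3) : Phi2 z 3 = z := rfl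

lemma np_ne_neg_np : (np : E3) ≠ -np := by
  intro h
  have := congrFun (congrArg WithLp.ofLp h) 2
  rw [np_apply2, neg_np_apply2] at this
  norm_num at this

lemma neg_np_ne_np : (-np : E3) ≠ np := fun h => np_ne_neg_np h.symm

lemma fin4_cases (y : Fin 4 → E3) (P : (Fin 4 → E3) → Fin 4 → Prop)
    (h0 : P y 0) (h1 : P y 1) (h2 : P y 2) (h3 : P y 3) : ∀ i, P y i := by
  intro i
  match i with
  | ⟨0, _⟩ => exact h0
  | ⟨1, _⟩ => exact h1
  | ⟨2, _⟩ => exact h2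
  | ⟨3, _⟩ => exact h3

lemma ext4 {y z : Fin 4 → E3} (h0 : y 0 = z 0) (h1 : y 1 = z 1) (h2 : y 2 = z 2)
    (h3 : y 3 = z 3) : y = z := by
  funext i
  match i with
  | ⟨0, _⟩ => exact h0
  | ⟨1, _⟩ => exact h1
  | ⟨2, _⟩ => exact h2
  | ⟨3, _⟩ => exact h3

lemma norm_neg_np : ‖(-np : E3)‖ = 1 := by rw [norm_neg]; exact norm_np

lemma Phi0_mem_Sa {z : E3} (hz : nsq z = 1) : Phi0 z ∈ Sa := by
  refine ⟨?_, rfl, rfl, rfl⟩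
  have hz1 := norm_eq_one_iff.2 hz
  exact fin4_cases _ (fun y i => ‖y i‖ = 1) hz1 hz1 norm_neg_np norm_np

lemma Phi1_mem_Sb {z : E3} (hz : nsq z = 1) : Phi1 z ∈ Sb := by
  refine ⟨?_, rfl, rfl, rfl⟩
  have hz1 := norm_eq_one_iff.2 hz
  exact fin4_cases _ (fun y i => ‖y i‖ = 1) norm_neg_np hz1 hz1 norm_np

lemma Phi2_mem_Sc {z : E3} (hz : nsq z = 1) : Phi2 z ∈ Sc := by
  refine ⟨?_, rfl, rfl, rfl⟩
  have hz1 := norm_eq_one_iff.2 hz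
  exact fin4_cases _ (fun y i => ‖y i‖ = 1) norm_neg_np norm_np hz1 hz1

lemma Sa_eq_Phi0 {y : Fin 4 → E3} (hy : y ∈ Sa) : y = Phi0 (y 0) :=
  ext4 rfl hy.2.1.symm hy.2.2.1 hy.2.2.2

lemma Sb_eq_Phi1 {y : Fin 4 → E3} (hy : y ∈ Sb) : y = Phi1 (y 1) :=
  ext4 hy.2.1 rfl hy.2.2.1.symm hy.2.2.2

lemma Sc_eq_Phi2 {y : Fin 4 → E3} (hy : y ∈ Sc) : y = Phi2 (y 2) :=
  ext4 hy.2.1 hy.2.2.1 rfl hy.2.2.2.symm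

lemma Sa_nsq {y : Fin 4 → E3} (hy : y ∈ Sa) : nsq (y 0) = 1 := norm_eq_one_iff.1 (hy.1 0)
lemma Sb_nsq {y : Fin 4 → E3} (hy : y ∈ Sb) : nsq (y 1) = 1 := norm_eq_one_iff.1 (hy.1 1)
lemma Sc_nsq {y : Fin 4 → E3} (hy : y ∈ Sc) : nsq (y 2) = 1 := norm_eq_one_iff.1 (hy.1 2)

lemma Phi1_mem_Sa {z : E3} (h : Phi1 z ∈ Sa) : z = -np := by
  have := h.2.1
  simp only [Phi1_0, Phi1_1] at this
  exact this.symm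

lemma Phi1_mem_Sc {z : E3} (h : Phi1 z ∈ Sc) : z = np := by
  have h' := h.2.2.1
  simp only [Phi1_1] at h'
  exact h'

lemma Phi0_mem_Sb {z : E3} (h : Phi0 z ∈ Sb) : z = -np := by
  have h' := h.2.1
  simp only [Phi0_0] at h'
  exact h'

lemma Phi0_not_mem_Sc {z : E3} (h : Phi0 z ∈ Sc) : False := by
  have h0 := h.2.1
  have h1 := h.2.2.1
  simp only [Phi0_0, Phi0_1] at h0 h1
  rw [h0] at h1
  exact neg_np_ne_np h1

lemma Phi2_not_mem_Sa {z : E3} (h : Phi2 z ∈ Sa) : False := by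
  have h0 := h.2.1
  simp only [Phi2_0, Phi2_1] at h0
  exact neg_np_ne_np h0

lemma Phi2_mem_Sb {z : E3} (h : Phi2 z ∈ Sb) : z = np := by
  have h' := h.2.2.1
  simp only [Phi2_1, Phi2_2] at h'
  exact h'.symm

/-! ### The intersection lemmas of the theorem -/

lemma Sa_inter_Sb : Sa ∩ Sb = {fun i => if i = 3 then np else -np} := by
  ext y
  constructor
  · rintro ⟨ha, hb⟩
    have h1 : y 1 = -np := by rw [← ha.2.1]; exact hb.2.1
    have h2 : y 2 = -np := ha.2.2.1
    have h0 : y 0 = -np := hb.2.1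
    have h3 : y 3 = np := ha.2.2.2
    refine Set.mem_singleton_iff.2 (ext4 ?_ ?_ ?_ ?_) <;> simp [h0, h1, h2, h3]
  · intro hy
    rw [Set.mem_singleton_iff] at hy
    subst hy
    constructor
    · refine ⟨?_, by simp, by simp, by simp⟩
      exact fin4_cases _ (fun y i => ‖y i‖ = 1) (by simp [norm_np]) (by simp [norm_np])
        (by simp [norm_np]) (by simp [norm_np])
    · refine ⟨?_, by simp, by simp, by simp⟩
      exact fin4_cases _ (fun y i => ‖y i‖ = 1) (by simp [norm_np]) (by simp [norm_np])
        (by simp [norm_np]) (by simp [norm_np])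

lemma Sb_inter_Sc : Sb ∩ Sc = {fun i => if i = 0 then -np else np} := by
  ext y
  constructor
  · rintro ⟨hb, hc⟩
    have h0 : y 0 = -np := hb.2.1
    have h1 : y 1 = np := hc.2.2.1
    have h2 : y 2 = np := by rw [← hb.2.2.1]; exact h1
    have h3 : y 3 = np := hb.2.2.2
    refine Set.mem_singleton_iff.2 (ext4 ?_ ?_ ?_ ?_) <;> simp [h0, h1, h2, h3]
  · intro hy
    rw [Set.mem_singleton_iff] at hy
    subst hy
    constructor
    · refine ⟨?_, by simp, by simp, by simp⟩
      exact fin4_cases _ (fun y i => ‖y i‖ = 1) (by simp [norm_np]) (by simp [norm_np])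
        (by simp [norm_np]) (by simp [norm_np])
    · refine ⟨?_, by simp, by simp, by simp⟩
      exact fin4_cases _ (fun y i => ‖y i‖ = 1) (by simp [norm_np]) (by simp [norm_np])
        (by simp [norm_np]) (by simp [norm_np])

lemma Sa_inter_Sc : Sa ∩ Sc = ∅ := by
  ext y
  simp only [Set.mem_inter_iff, Set.mem_empty_iff_false, iff_false]
  rintro ⟨ha, hc⟩
  have h1 : y 1 = -np := by rw [← ha.2.1]; exact hc.2.1
  rw [hc.2.2.1] at h1
  exact np_ne_neg_np h1

/-! ### Closedness -/

lemma isClosed_Sa : IsClosed Sa := by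
  have : Sa = (⋂ i, {y : Fin 4 → E3 | ‖y i‖ = 1}) ∩
      ({y : Fin 4 → E3 | y 0 = y 1} ∩ ({y | y 2 = -np} ∩ {y | y 3 = np})) := by
    ext y; simp [Sa, Set.mem_iInter, and_assoc]
  rw [this]
  refine IsClosed.inter (isClosed_iInter fun i =>
    isClosed_eq (continuous_norm.comp (continuous_apply i)) continuous_const) ?_
  exact IsClosed.inter (isClosed_eq (continuous_apply 0) (continuous_apply 1))
    (IsClosed.inter (isClosed_eq (continuous_apply 2) continuous_const)
      (isClosed_eq (continuous_apply 3) continuous_const))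

lemma isClosed_Sb : IsClosed Sb := by
  have : Sb = (⋂ i, {y : Fin 4 → E3 | ‖y i‖ = 1}) ∩
      ({y : Fin 4 → E3 | y 0 = -np} ∩ ({y | y 1 = y 2} ∩ {y | y 3 = np})) := by
    ext y; simp [Sb, Set.mem_iInter, and_assoc]
  rw [this]
  refine IsClosed.inter (isClosed_iInter fun i =>
    isClosed_eq (continuous_norm.comp (continuous_apply i)) continuous_const) ?_
  exact IsClosed.inter (isClosed_eq (continuous_apply 0) continuous_const)
    (IsClosed.inter (isClosed_eq (continuous_apply 1) (continuous_apply 2))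
      (isClosed_eq (continuous_apply 3) continuous_const))

lemma isClosed_Sc : IsClosed Sc := by
  have : Sc = (⋂ i, {y : Fin 4 → E3 | ‖y i‖ = 1}) ∩
      ({y : Fin 4 → E3 | y 0 = -np} ∩ ({y | y 1 = np} ∩ {y | y 2 = y 3})) := by
    ext y; simp [Sc, Set.mem_iInter, and_assoc]
  rw [this]
  refine IsClosed.inter (isClosed_iInter fun i =>
    isClosed_eq (continuous_norm.comp (continuous_apply i)) continuous_const) ?_
  exact IsClosed.inter (isClosed_eq (continuous_apply 0) continuous_const)
    (IsClosed.inter (isClosed_eq (continuous_apply 1) continuous_const)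
      (isClosed_eq (continuous_apply 2) (continuous_apply 3)))

/-! ### Sphere membership facts -/

lemma eq_zero_of_nsq_zero {z : E3} (h : nsq z = 0) : z = 0 := by
  unfold nsq at h
  apply E3_ext <;> simp only [PiLp.zero_apply] <;> nlinarith [sq_nonneg (z 0), sq_nonneg (z 1), sq_nonneg (z 2)]

lemma mem_sphere_k {k : ℝ} (hk : 0 < k) {w : E3} :
    w ∈ Metric.sphere (k•np) k ↔ nsq (w - k•np) = k^2 := by
  rw [mem_sphere_iff_norm]
  constructor
  · intro h; rw [← norm_sq_eq, h]
  · intro h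
    have h1 : ‖w - k•np‖^2 = k^2 := by rw [norm_sq_eq]; exact h
    nlinarith [norm_nonneg (w - k•np)]

lemma smul_np_mem {k : ℝ} (hk : 0 < k) {x : E3} (hx : nsq x = 1) :
    k • (np - x) ∈ Metric.sphere (k•np) k := by
  rw [mem_sphere_iff_norm]
  have : k • (np - x) - k • np = k • (-x) := by module
  rw [this, norm_smul, norm_neg, norm_eq_one_iff.2 hx]
  simp [abs_of_pos hk]

lemma coord_of_mem {k : ℝ} (hk : 0 < k) {w : E3} (hw : w ∈ Metric.sphere (k•np) k) :
    nsq (np - k⁻¹ • w) = 1 := by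
  rw [mem_sphere_iff_norm] at hw
  have h1 : np - k⁻¹ • w = (-k⁻¹) • (w - k • np) := by
    rw [neg_smul, smul_sub, smul_smul, inv_mul_cancel₀ hk.ne']
    module
  rw [← norm_eq_one_iff, h1, norm_smul, hw]
  simp [Real.norm_eq_abs, abs_inv, abs_of_pos hk, inv_mul_cancel₀ hk.ne']

lemma sphere_nsq_eq {k : ℝ} (hk : 0 < k) {w : E3} (hw : w ∈ Metric.sphere (k•np) k) :
    nsq w = 2*k*(w 2) := by
  rw [mem_sphere_k hk] at hw
  unfold nsq at hw ⊢
  simp only [PiLp.sub_apply, PiLp.smul_apply, np_apply0, np_apply1, np_apply2, smul_eq_mul] at hw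
  nlinarith [hw]

lemma sphere_inter_eq_zero {j k : ℝ} (hj : 0 < j) (hk : 0 < k) (hjk : j ≠ k) {w : E3}
    (hwj : w ∈ Metric.sphere (j•np) j) (hwk : w ∈ Metric.sphere (k•np) k) : w = 0 := by
  have e1 := sphere_nsq_eq hj hwj
  have e2 := sphere_nsq_eq hk hwk
  have hw2 : w 2 = 0 := by
    have : 2*(j-k)*(w 2) = 0 := by linarith
    rcases mul_eq_zero.1 this with h | h
    · rcases mul_eq_zero.1 h with h' | h'
      · norm_num at h'
      · exact absurd (by linarith : j = k) hjk
    · exact h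
  apply eq_zero_of_nsq_zero
  rw [e1, hw2]; ring

/-! ### Special values -/

lemma rh_np : rh np = -np := by apply E3_ext <;> simp [rh]
lemma rh_neg_np : rh (-np) = np := by apply E3_ext <;> simp [rh]
lemma rh_rh (x : E3) : rh (rh x) = x := by apply E3_ext <;> simp [rh]
lemma Rl_np : Rl np = V3 1 0 0 := by apply E3_ext <;> simp [Rl]
lemma Rl_neg_np : Rl (-np) = V3 (-1) 0 0 := by apply E3_ext <;> simp [Rl]
lemma uW_np : uW np = V3 (-1) 0 0 := by
  unfold uW; rw [np_apply0, if_pos (le_refl _ : (0:ℝ) ≤ 0)]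
  apply E3_ext <;> simp
lemma mW_np : mW np = np := by
  rw [mW, uW_np]
  apply E3_ext <;> simp [Rl]
lemma uW_neg_np : uW (-np) = V3 (-1) 0 0 := by
  unfold uW
  rw [neg_np_apply0, if_pos (le_refl _ : (0:ℝ) ≤ 0)]
  apply E3_ext <;> simp
lemma mW_neg_np : mW (-np) = np := by
  rw [mW, uW_neg_np]
  apply E3_ext <;> simp [Rl]
lemma uC_np : uC np = V3 1 0 0 := by
  unfold uC; rw [np_apply0, if_pos (le_refl _ : (0:ℝ) ≤ 0)]
  apply E3_ext <;> simp
lemma mC_np : mC np = -np := by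
  rw [mC, uC_np]
  apply E3_ext <;> simp [Rl]
lemma uC_neg_np : uC (-np) = V3 1 0 0 := by
  unfold uC; rw [neg_np_apply0, if_pos (le_refl _ : (0:ℝ) ≤ 0)]
  apply E3_ext <;> simp
lemma mC_neg_np : mC (-np) = -np := by
  rw [mC, uC_neg_np]
  apply E3_ext <;> simp [Rl]
lemma wrapb_x0_zero {x : E3} (h : x 0 = 0) : wrapb x = np := by
  apply E3_ext <;> simp [wrapb, h]
lemma dl_x2_zero {x : E3} (h : x 2 = 0) : dl x = np := by
  apply E3_ext <;> simp [dl, h]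
lemma dlT_np : dlT np = np := by
  unfold dlT; rw [np_apply2, if_pos (by norm_num : (0:ℝ) ≤ 1)]
lemma cpath_zero : cpath 0 = np := by
  unfold cpath
  rw [min_eq_left (by norm_num)]
  exact om_one
lemma cpath_one : cpath 1 = -np := by
  unfold cpath
  norm_num
  exact om_zero
lemma om_comp1 (t : ℝ) : om t 1 = 0 := by simp [om]
lemma om_comp0_nonneg {t : ℝ} (h0 : 0 ≤ t) (h1 : t ≤ 1) : 0 ≤ om t 0 := by
  have := om_denom_pos t
  simp only [om, V3_apply0]
  exact div_nonneg (by nlinarith) this.le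

end SpringerAux

namespace SpringerAux
open Set Metric Classical

/-! ### Auxiliary facts -/

lemma zero_mem_S1 : (0:E3) ∈ S1 :=
  mem_sphere_iff_norm.2 (by rw [zero_sub, norm_neg]; exact norm_np)

lemma S1_eq : S1 = Metric.sphere ((1:ℝ)•np) 1 := by rw [one_smul]; rfl

lemma coord_S1 {w : E3} (hw : w ∈ S1) : nsq (np - w) = 1 := by
  have := coord_of_mem one_pos (S1_eq ▸ hw)
  simpa using this

lemma coord_S2 {w : E3} (hw : w ∈ S2) : nsq (np - (2:ℝ)⁻¹ • w) = 1 :=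
  coord_of_mem two_pos hw

lemma coord_S3 {w : E3} (hw : w ∈ S3) : nsq (np - (3:ℝ)⁻¹ • w) = 1 :=
  coord_of_mem three_pos hw

lemma S1_inter_S2 {w : E3} (h1 : w ∈ S1) (h2 : w ∈ S2) : w = 0 :=
  sphere_inter_eq_zero one_pos two_pos (by norm_num) (S1_eq ▸ h1) h2

lemma S1_inter_S3 {w : E3} (h1 : w ∈ S1) (h3 : w ∈ S3) : w = 0 :=
  sphere_inter_eq_zero one_pos three_pos (by norm_num) (S1_eq ▸ h1) h3

lemma S2_inter_S3 {w : E3} (h2 : w ∈ S2) (h3 : w ∈ S3) : w = 0 :=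
  sphere_inter_eq_zero two_pos three_pos (by norm_num) h2 h3

lemma comp2_le_one {x : E3} (hx : nsq x = 1) : x 2 ≤ 1 := by
  unfold nsq at hx; nlinarith [sq_nonneg (x 0), sq_nonneg (x 1), sq_nonneg (x 2 - 1)]

lemma eq_np_of_comp2 {x : E3} (hx : nsq x = 1) (h2 : x 2 = 1) : x = np := by
  unfold nsq at hx
  apply E3_ext
  · simp only [np_apply0]; nlinarith [sq_nonneg (x 0), sq_nonneg (x 1)]
  · simp only [np_apply1]; nlinarith [sq_nonneg (x 0), sq_nonneg (x 1)]
  · simp only [np_apply2]; exact h2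

lemma Phi0_neg_np_eq_Phi1 : Phi0 (-np) = Phi1 (-np) := by
  apply ext4 <;> rfl

lemma Phi1_np_eq_Phi2 : Phi1 np = Phi2 np := by
  apply ext4 <;> rfl

lemma wrapb_rh {x : E3} (h : 0 ≤ x 0) : wrapb (rh x) = mW x := by
  unfold mW uW
  rw [if_pos h]
  apply E3_ext <;> simp [wrapb, rh, Rl] <;> ring

lemma mW_of_neg {x : E3} (h : ¬ 0 ≤ x 0) : mW x = np := by
  unfold mW uW
  rw [if_neg h]
  apply E3_ext <;> simp [Rl]

lemma rh_wrapb {x : E3} (h : x 0 ≤ 0) : rh (wrapb x) = mC x := by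
  unfold mC uC
  rw [if_pos h]
  apply E3_ext <;> simp [wrapb, rh, Rl] <;> ring

lemma mC_of_pos {x : E3} (h : ¬ x 0 ≤ 0) : mC x = -np := by
  unfold mC uC
  rw [if_neg h]
  apply E3_ext <;> simp [Rl]

lemma wrapb_comp2 {x : E3} (h : wrapb x 2 = 1) : x 0 = 0 := by
  simp only [wrapb, V3_apply2] at h
  nlinarith

lemma dl_ne_np {x : E3} (h : ¬ 0 ≤ x 2) : dl x ≠ np := by
  intro he
  have := congrFun (congrArg WithLp.ofLp he) 2
  simp only [dl, V3_apply2, np_apply2] at this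
  nlinarith

lemma om_eq_neg_np {τ : ℝ} (h : om τ = -np) : τ = 0 := by
  have := congrFun (congrArg WithLp.ofLp h) 2
  have hd := om_denom_pos τ
  simp only [om, V3_apply2, neg_np_apply2] at this
  have : 2*τ-1 = -(τ^2+(1-τ)^2) := by
    field_simp at this; linarith
  nlinarith

/-! ### The map `F0 : X31 → WS` -/

noncomputable def F0 (y : Fin 4 → E3) : E3 :=
  if y ∈ Sa then np - rh (y 0)
  else if y ∈ Sb then (if y 1 0 ≤ 0 then (2:ℝ) • (np - wrapb (y 1)) else 0)
  else (3:ℝ) • (np - y 2)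

lemma F0_Sa {y : Fin 4 → E3} (hy : y ∈ Sa) : F0 y = np - rh (y 0) := if_pos hy

lemma F0_Sb {y : Fin 4 → E3} (hy : y ∈ Sb) :
    F0 y = if y 1 0 ≤ 0 then (2:ℝ) • (np - wrapb (y 1)) else 0 := by
  unfold F0
  by_cases ha : y ∈ Sa
  · have h1 : y 1 = -np := by rw [← ha.2.1]; exact hy.2.1
    rw [if_pos ha, hy.2.1, rh_neg_np, h1]
    have hc : ((-np : E3) 0 ≤ 0) := by rw [neg_np_apply0]
    rw [if_pos hc, wrapb_x0_zero neg_np_apply0]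
    simp
  · rw [if_neg ha, if_pos hy]

lemma F0_Sc {y : Fin 4 → E3} (hy : y ∈ Sc) : F0 y = (3:ℝ) • (np - y 2) := by
  unfold F0
  have ha : y ∉ Sa := by
    intro h
    have : y ∈ Sa ∩ Sc := ⟨h, hy⟩
    rw [Sa_inter_Sc] at this
    exact this
  rw [if_neg ha]
  by_cases hb : y ∈ Sb
  · have h2 : y 2 = np := by rw [← hb.2.2.1]; exact hy.2.2.1
    have h1 : y 1 = np := hy.2.2.1
    rw [if_pos hb, h1, h2]
    have hc : ((np : E3) 0 ≤ 0) := by rw [np_apply0]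
    rw [if_pos hc, wrapb_x0_zero np_apply0]
    simp
  · rw [if_neg hb]

/-! ### The map `G0 : WS → X31` -/

noncomputable def tongue (x : E3) : Fin 4 → E3 :=
  if 0 ≤ x 2 then Phi1 (cpath (x 2)) else Phi2 (dl x)

noncomputable def G0 (w : E3) : Fin 4 → E3 :=
  if w ∈ S1 then Phi0 (rh (np - w))
  else if w ∈ S2 then Phi1 (rh (np - (2:ℝ)⁻¹ • w))
  else tongue (np - (3:ℝ)⁻¹ • w)

lemma G0_zero : G0 0 = Phi1 (-np) := by
  unfold G0
  rw [if_pos zero_mem_S1]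
  rw [sub_zero, rh_np, Phi0_neg_np_eq_Phi1]

lemma G0_S1 {w : E3} (hw : w ∈ S1) : G0 w = Phi0 (rh (np - w)) := if_pos hw

lemma G0_S2 {w : E3} (hw : w ∈ S2) : G0 w = Phi1 (rh (np - (2:ℝ)⁻¹ • w)) := by
  by_cases h1 : w ∈ S1
  · have hw0 : w = 0 := S1_inter_S2 h1 hw
    subst hw0
    rw [G0_zero, smul_zero, sub_zero, rh_np]
  · unfold G0; rw [if_neg h1, if_pos hw]

lemma G0_S3 {w : E3} (hw : w ∈ S3) : G0 w = tongue (np - (3:ℝ)⁻¹ • w) := by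
  by_cases h1 : w ∈ S1
  · have hw0 : w = 0 := S1_inter_S3 h1 hw
    subst hw0
    rw [G0_zero, smul_zero, sub_zero]
    unfold tongue
    rw [if_pos (by rw [np_apply2]; norm_num : (0:ℝ) ≤ (np:E3) 2), np_apply2, cpath_one]
  · have h2 : w ∉ S2 := by
      intro h2
      exact h1 (S2_inter_S3 h2 hw ▸ zero_mem_S1)
    unfold G0; rw [if_neg h1, if_neg h2]

end SpringerAux

namespace SpringerAux
open Set Metric

/-! ### Gluing continuity over closed covers -/

lemma contOn_union {α β : Type*} [TopologicalSpace α] [TopologicalSpace β] {f : α → β}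
    {s t : Set α} (hs : IsClosed s) (ht : IsClosed t)
    (hfs : ContinuousOn f s) (hft : ContinuousOn f t) : ContinuousOn f (s ∪ t) := by
  intro x hx
  have hws : ContinuousWithinAt f s x := by
    by_cases h : x ∈ s
    · exact hfs x h
    · exact continuousWithinAt_of_notMem_closure (by rwa [hs.closure_eq])
  have hwt : ContinuousWithinAt f t x := by
    by_cases h : x ∈ t
    · exact hft x h
    · exact continuousWithinAt_of_notMem_closure (by rwa [ht.closure_eq])
  exact hws.union hwt

lemma isClosed_S1 : IsClosed S1 := Metric.isClosed_sphere
lemma isClosed_S2 : IsClosed S2 := Metric.isClosed_sphere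
lemma isClosed_S3 : IsClosed S3 := Metric.isClosed_sphere

lemma continuous_Phi0_comp {X : Type*} [TopologicalSpace X] {z : X → E3} (hz : Continuous z) :
    Continuous fun w => Phi0 (z w) := by
  apply continuous_pi
  intro i
  match i with
  | ⟨0, _⟩ => exact hz
  | ⟨1, _⟩ => exact hz
  | ⟨2, _⟩ => exact continuous_const
  | ⟨3, _⟩ => exact continuous_const

lemma continuous_Phi1_comp {X : Type*} [TopologicalSpace X] {z : X → E3} (hz : Continuous z) :
    Continuous fun w => Phi1 (z w) := by
  apply continuous_pi
  intro i
  match i with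
  | ⟨0, _⟩ => exact continuous_const
  | ⟨1, _⟩ => exact hz
  | ⟨2, _⟩ => exact hz
  | ⟨3, _⟩ => exact continuous_const

lemma continuous_Phi2_comp {X : Type*} [TopologicalSpace X] {z : X → E3} (hz : Continuous z) :
    Continuous fun w => Phi2 (z w) := by
  apply continuous_pi
  intro i
  match i with
  | ⟨0, _⟩ => exact continuous_const
  | ⟨1, _⟩ => exact continuous_const
  | ⟨2, _⟩ => exact hz
  | ⟨3, _⟩ => exact hz

lemma continuous_tongue : Continuous tongue := by
  unfold tongue
  apply Continuous.if_le _ _ continuous_const (contc 2)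
  · intro x hx
    rw [← hx, cpath_zero, dl_x2_zero hx.symm, Phi1_np_eq_Phi2]
  · exact continuous_Phi1_comp (continuous_cpath.comp (contc 2))
  · exact continuous_Phi2_comp continuous_dl

/-! ### Composite identities: wedge side at time 0 -/

lemma mem_S1_of_nsq {x : E3} (hx : nsq x = 1) : np - x ∈ S1 := by
  apply mem_sphere_iff_norm.2
  have h : np - x - np = -x := by abel
  rw [h, norm_neg]
  exact norm_eq_one_iff.2 hx

lemma FG_S1 {w : E3} (hw : w ∈ S1) : F0 (G0 w) = w := by
  rw [G0_S1 hw]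
  have hx : nsq (np - w) = 1 := coord_S1 hw
  rw [F0_Sa (Phi0_mem_Sa (nsq_rh hx)), Phi0_0, rh_rh, sub_sub_cancel]

lemma F0_Phi1_neg_np : F0 (Phi1 (-np)) = 0 := by
  rw [F0_Sb (Phi1_mem_Sb (by rw [← norm_eq_one_iff]; exact norm_neg_np))]
  rw [Phi1_1]
  rw [if_pos (by rw [neg_np_apply0] : ((-np:E3)) 0 ≤ 0), wrapb_x0_zero neg_np_apply0]
  simp

lemma FG_S2 {w : E3} (hw : w ∈ S2) :
    F0 (G0 w) = (2:ℝ) • (np - mW (np - (2:ℝ)⁻¹ • w)) := by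
  by_cases h1 : w ∈ S1
  · have hw0 : w = 0 := S1_inter_S2 h1 hw
    subst hw0
    rw [G0_zero, F0_Phi1_neg_np, smul_zero, sub_zero, mW_np, sub_self, smul_zero]
  · rw [G0_S2 hw]
    have hx : nsq (np - (2:ℝ)⁻¹ • w) = 1 := coord_S2 hw
    set x := np - (2:ℝ)⁻¹ • w with hxdef
    have hxne : rh x ≠ -np := by
      intro h
      have hxnp : x = np := by rw [← rh_rh x, h, rh_neg_np]
      apply h1
      have hw0 : w = 0 := by
        have h2 : (2:ℝ)⁻¹ • w = 0 := by
          have := sub_eq_zero.2 hxnp.symm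
          rwa [hxdef, sub_sub_cancel] at this
        rcases smul_eq_zero.1 h2 with h' | h'
        · norm_num at h'
        · exact h'
      rw [hw0]; exact zero_mem_S1
    have hmem : Phi1 (rh x) ∈ Sb := Phi1_mem_Sb (nsq_rh hx)
    have hnotSa : Phi1 (rh x) ∉ Sa := fun h => hxne (Phi1_mem_Sa h)
    unfold F0
    rw [if_neg hnotSa, if_pos hmem]
    rw [Phi1_1]
    by_cases hx0 : 0 ≤ x 0
    · have hle : rh x 0 ≤ 0 := by simp only [rh, V3_apply0]; linarith
      rw [if_pos hle, wrapb_rh hx0]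
    · have hle : ¬ (rh x 0 ≤ 0) := by simp only [rh, V3_apply0]; push_neg at hx0 ⊢; linarith
      rw [if_neg hle, mW_of_neg hx0]
      simp

lemma FG_S3 {w : E3} (hw : w ∈ S3) :
    F0 (G0 w) = (3:ℝ) • (np - dlT (np - (3:ℝ)⁻¹ • w)) := by
  by_cases h1 : w ∈ S1
  · have hw0 : w = 0 := S1_inter_S3 h1 hw
    subst hw0
    rw [G0_zero, F0_Phi1_neg_np, smul_zero, sub_zero, dlT_np, sub_self, smul_zero]
  · rw [G0_S3 hw]
    have hx : nsq (np - (3:ℝ)⁻¹ • w) = 1 := coord_S3 hw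
    set x := np - (3:ℝ)⁻¹ • w with hxdef
    have hxnp : x ≠ np := by
      intro h
      apply h1
      have hw0 : w = 0 := by
        have h2 : (3:ℝ)⁻¹ • w = 0 := by
          have := sub_eq_zero.2 h.symm
          rwa [hxdef, sub_sub_cancel] at this
        rcases smul_eq_zero.1 h2 with h' | h'
        · norm_num at h'
        · exact h'
      rw [hw0]; exact zero_mem_S1
    unfold tongue dlT
    by_cases h2 : 0 ≤ x 2
    · rw [if_pos h2, if_pos h2]
      have hx2le : x 2 ≤ 1 := comp2_le_one hx
      have hτ0 : 0 ≤ min 1 (2 - 2 * x 2) := le_min (by norm_num) (by linarith)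
      have hτ1 : min 1 (2 - 2 * x 2) ≤ 1 := min_le_left _ _
      have hcne : cpath (x 2) ≠ -np := by
        intro h
        have hτ := om_eq_neg_np h
        have h22 : (2:ℝ) - 2 * x 2 = 0 := by
          rcases min_eq_iff.1 hτ with ⟨h', _⟩ | ⟨h', _⟩
          · norm_num at h'
          · linarith
        exact hxnp (eq_np_of_comp2 hx (by linarith))
      have hmem : Phi1 (cpath (x 2)) ∈ Sb := Phi1_mem_Sb (nsq_cpath _)
      have hnotSa : Phi1 (cpath (x 2)) ∉ Sa := fun h => hcne (Phi1_mem_Sa h)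
      unfold F0
      rw [if_neg hnotSa, if_pos hmem]
      rw [Phi1_1]
      have hc0 : 0 ≤ cpath (x 2) 0 := om_comp0_nonneg hτ0 hτ1
      by_cases hle : cpath (x 2) 0 ≤ 0
      · rw [if_pos hle, wrapb_x0_zero (le_antisymm hle hc0)]
        simp
      · rw [if_neg hle]
        simp
    · rw [if_neg h2, if_neg h2]
      have hd : dl x ≠ np := dl_ne_np h2
      have hmem : Phi2 (dl x) ∈ Sc := Phi2_mem_Sc (nsq_dl hx)
      have hnotSa : Phi2 (dl x) ∉ Sa := fun h => Phi2_not_mem_Sa h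
      have hnotSb : Phi2 (dl x) ∉ Sb := fun h => hd (Phi2_mem_Sb h)
      unfold F0
      rw [if_neg hnotSa, if_neg hnotSb]
      simp only [Phi2_2]

/-! ### Composite identities: chain side at time 0 -/

lemma GF_Sa {y : Fin 4 → E3} (hy : y ∈ Sa) : G0 (F0 y) = y := by
  rw [F0_Sa hy]
  have hx : nsq (y 0) = 1 := Sa_nsq hy
  have hmem : np - rh (y 0) ∈ S1 := mem_S1_of_nsq (nsq_rh hx)
  rw [G0_S1 hmem, sub_sub_cancel, rh_rh]
  exact (Sa_eq_Phi0 hy).symm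

lemma GF_Sb {y : Fin 4 → E3} (hy : y ∈ Sb) : G0 (F0 y) = Phi1 (mC (y 1)) := by
  rw [F0_Sb hy]
  have hx : nsq (y 1) = 1 := Sb_nsq hy
  by_cases hle : y 1 0 ≤ 0
  · rw [if_pos hle]
    have hmem : (2:ℝ) • (np - wrapb (y 1)) ∈ S2 := smul_np_mem two_pos (nsq_wrapb hx)
    rw [G0_S2 hmem]
    have hcan : np - (2:ℝ)⁻¹ • ((2:ℝ) • (np - wrapb (y 1))) = wrapb (y 1) := by
      rw [smul_smul]
      norm_num
    rw [hcan, rh_wrapb hle]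
  · rw [if_neg hle, G0_zero, mC_of_pos hle]

lemma GF_Sc {y : Fin 4 → E3} (hy : y ∈ Sc) : G0 (F0 y) = tongue (y 2) := by
  rw [F0_Sc hy]
  have hx : nsq (y 2) = 1 := Sc_nsq hy
  have hmem : (3:ℝ) • (np - y 2) ∈ S3 := smul_np_mem three_pos hx
  rw [G0_S3 hmem]
  congr 1
  rw [smul_smul]
  norm_num

/-! ### Image memberships -/

lemma mem_X31_of_Sa {y : Fin 4 → E3} (h : y ∈ Sa) : y ∈ X31 := Or.inl (Or.inl h)
lemma mem_X31_of_Sb {y : Fin 4 → E3} (h : y ∈ Sb) : y ∈ X31 := Or.inl (Or.inr h)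
lemma mem_X31_of_Sc {y : Fin 4 → E3} (h : y ∈ Sc) : y ∈ X31 := Or.inr h

lemma tongue_mem {x : E3} (hx : nsq x = 1) : tongue x ∈ X31 := by
  unfold tongue
  split_ifs
  · exact mem_X31_of_Sb (Phi1_mem_Sb (nsq_cpath _))
  · exact mem_X31_of_Sc (Phi2_mem_Sc (nsq_dl hx))

lemma G0_mem {w : E3} (hw : w ∈ WS) : G0 w ∈ X31 := by
  rcases hw with (h | h) | h
  · rw [G0_S1 h]
    exact mem_X31_of_Sa (Phi0_mem_Sa (nsq_rh (coord_S1 h)))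
  · rw [G0_S2 h]
    exact mem_X31_of_Sb (Phi1_mem_Sb (nsq_rh (coord_S2 h)))
  · rw [G0_S3 h]
    exact tongue_mem (coord_S3 h)

lemma mem_WS_S1 {w : E3} (h : w ∈ S1) : w ∈ WS := Or.inl (Or.inl h)
lemma mem_WS_S2 {w : E3} (h : w ∈ S2) : w ∈ WS := Or.inl (Or.inr h)
lemma mem_WS_S3 {w : E3} (h : w ∈ S3) : w ∈ WS := Or.inr h

lemma F0_mem {y : Fin 4 → E3} (hy : y ∈ X31) : F0 y ∈ WS := by
  rcases hy with (h | h) | h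
  · rw [F0_Sa h]
    exact mem_WS_S1 (mem_S1_of_nsq (nsq_rh (Sa_nsq h)))
  · rw [F0_Sb h]
    split_ifs
    · exact mem_WS_S2 (smul_np_mem two_pos (nsq_wrapb (Sb_nsq h)))
    · exact mem_WS_S1 zero_mem_S1
  · rw [F0_Sc h]
    exact mem_WS_S3 (smul_np_mem three_pos (Sc_nsq h))

/-! ### Continuity of `F0` and `G0` -/

lemma contOn_F0 : ContinuousOn F0 X31 := by
  have hSa : ContinuousOn F0 Sa :=
    ContinuousOn.congr
      ((continuous_const.sub (continuous_rh.comp (continuous_apply 0))).continuousOn)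
      (fun y hy => F0_Sa hy)
  have hSb : ContinuousOn F0 Sb := by
    apply ContinuousOn.congr (f := fun y : Fin 4 → E3 =>
      if y 1 0 ≤ 0 then (2:ℝ) • (np - wrapb (y 1)) else 0)
    · apply Continuous.continuousOn
      apply Continuous.if_le _ continuous_const ((contc 0).comp (continuous_apply 1))
        continuous_const
      · intro y hy
        rw [wrapb_x0_zero hy, sub_self, smul_zero]
      · exact (continuous_const (y := (2:ℝ))).smul
          (continuous_const.sub (continuous_wrapb.comp (continuous_apply 1)))
    · exact fun y hy => F0_Sb hy
  have hSc : ContinuousOn F0 Sc :=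
    ContinuousOn.congr
      (((continuous_const (y := (3:ℝ))).smul (continuous_const.sub (continuous_apply 2))).continuousOn)
      (fun y hy => F0_Sc hy)
  exact contOn_union (IsClosed.union isClosed_Sa isClosed_Sb) isClosed_Sc
    (contOn_union isClosed_Sa isClosed_Sb hSa hSb) hSc

lemma contOn_G0 : ContinuousOn G0 WS := by
  have hS1 : ContinuousOn G0 S1 :=
    ContinuousOn.congr
      ((continuous_Phi0_comp (continuous_rh.comp (continuous_const.sub continuous_id))).continuousOn)
      (fun w hw => G0_S1 hw)
  have hS2 : ContinuousOn G0 S2 :=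
    ContinuousOn.congr
      ((continuous_Phi1_comp (continuous_rh.comp
        (continuous_const.sub ((continuous_const (y := (2:ℝ)⁻¹)).smul continuous_id)))).continuousOn)
      (fun w hw => G0_S2 hw)
  have hS3 : ContinuousOn G0 S3 :=
    ContinuousOn.congr
      ((continuous_tongue.comp
        (continuous_const.sub ((continuous_const (y := (3:ℝ)⁻¹)).smul continuous_id))).continuousOn)
      (fun w hw => G0_S3 hw)
  exact contOn_union (IsClosed.union isClosed_S1 isClosed_S2) isClosed_S3
    (contOn_union isClosed_S1 isClosed_S2 hS1 hS2) hS3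

end SpringerAux

namespace SpringerAux
open Set Metric

/-! ### The four corrected sphere-level homotopy stages -/

noncomputable def mc1 (t : ℝ) (x : E3) : E3 := Qc (geo mC Rl t (-np)) (-np) (geo mC Rl t x)
noncomputable def mc2 (t : ℝ) (x : E3) : E3 := Qc (geo Rl id t (-np)) (-np) (geo Rl id t x)
noncomputable def mw1 (t : ℝ) (x : E3) : E3 := Qc (geo mW Rl t np) np (geo mW Rl t x)
noncomputable def mw2 (t : ℝ) (x : E3) : E3 := Qc (geo Rl id t np) np (geo Rl id t x)

lemma nsq_neg_np : nsq (-np : E3) = 1 := by simp [nsq]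

lemma nsq_geo' {f g : E3 → E3} {t : ℝ} {x : E3} (h : (1-t) • f x + t • g x ≠ 0) :
    nsq (geo f g t x) = 1 := by rw [geo]; exact nz_unit_nsq h

lemma geo_id_one {f : E3 → E3} {x : E3} (hx : nsq x = 1) : geo f id 1 x = x := by
  rw [geo]
  simp only [id_eq]
  norm_num
  exact nz_of_nsq_one hx

lemma nsq_id {x : E3} (hx : nsq x = 1) : nsq (id x) = 1 := hx

/-! Combination values -/

lemma combmC_neg_np (t : ℝ) : (1-t) • mC (-np) + t • Rl (-np) = V3 (-t) 0 (-(1-t)) := by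
  rw [mC_neg_np, Rl_neg_np]
  apply E3_ext <;>
    simp only [PiLp.add_apply, PiLp.smul_apply, V3_apply0, V3_apply1, V3_apply2,
      neg_np_apply0, neg_np_apply1, neg_np_apply2, smul_eq_mul] <;> ring

lemma combmC_np (t : ℝ) : (1-t) • mC np + t • Rl np = V3 t 0 (-(1-t)) := by
  rw [mC_np, Rl_np]
  apply E3_ext <;>
    simp only [PiLp.add_apply, PiLp.smul_apply, V3_apply0, V3_apply1, V3_apply2,
      neg_np_apply0, neg_np_apply1, neg_np_apply2, smul_eq_mul] <;> ring

lemma combRlid_neg_np (t : ℝ) : (1-t) • Rl (-np) + t • (-np : E3) = V3 (-(1-t)) 0 (-t) := by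
  rw [Rl_neg_np]
  apply E3_ext <;>
    simp only [PiLp.add_apply, PiLp.smul_apply, V3_apply0, V3_apply1, V3_apply2,
      neg_np_apply0, neg_np_apply1, neg_np_apply2, smul_eq_mul] <;> ring

lemma combRlid_np (t : ℝ) : (1-t) • Rl np + t • (np : E3) = V3 (1-t) 0 t := by
  rw [Rl_np]
  apply E3_ext <;>
    simp only [PiLp.add_apply, PiLp.smul_apply, V3_apply0, V3_apply1, V3_apply2,
      np_apply0, np_apply1, np_apply2, smul_eq_mul] <;> ring

lemma combmW_np (t : ℝ) : (1-t) • mW np + t • Rl np = V3 t 0 (1-t) := by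
  rw [mW_np, Rl_np]
  apply E3_ext <;>
    simp only [PiLp.add_apply, PiLp.smul_apply, V3_apply0, V3_apply1, V3_apply2,
      np_apply0, np_apply1, np_apply2, smul_eq_mul] <;> ring

lemma V3_ne_zero {α γ : ℝ} (h : α^2 + γ^2 ≠ 0) : V3 α 0 γ ≠ 0 := by
  intro h0
  apply h
  have h1 := congrFun (congrArg WithLp.ofLp h0) 0
  have h2 := congrFun (congrArg WithLp.ofLp h0) 2
  simp only [V3_apply0, V3_apply2, PiLp.zero_apply] at h1 h2
  rw [h1, h2]; ring

lemma denom_ne (t : ℝ) : t^2 + (1-t)^2 ≠ 0 := (om_denom_pos t).ne'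

lemma denom_ne' (t : ℝ) : (1-t)^2 + t^2 ≠ 0 := by
  have := om_denom_pos t; intro h; apply denom_ne t; linarith

lemma nz_ne_np_of {z : E3} (hz : z ≠ 0) (h2 : z 2 ≤ 0) : nz z ≠ np := by
  intro h
  have h2' := congrFun (congrArg WithLp.ofLp h) 2
  rw [nz_apply, np_apply2] at h2'
  have hpos : 0 ≤ ‖z‖⁻¹ := inv_nonneg.2 (norm_nonneg z)
  nlinarith

lemma nz_ne_neg_np_of {z : E3} (hz : z ≠ 0) (h2 : 0 ≤ z 2) : nz z ≠ -np := by
  intro h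
  have h2' := congrFun (congrArg WithLp.ofLp h) 2
  rw [nz_apply, neg_np_apply2] at h2'
  have hpos : 0 ≤ ‖z‖⁻¹ := inv_nonneg.2 (norm_nonneg z)
  nlinarith

lemma add_neg_np_ne {v : E3} (h : v ≠ np) : v + -np ≠ 0 := by
  intro h0; exact h (by rwa [add_neg_eq_zero] at h0)

lemma add_np_ne {v : E3} (h : v ≠ -np) : v + np ≠ 0 := by
  intro h0; exact h (by rwa [add_eq_zero_iff_eq_neg] at h0)

/-! ν-track conditions -/

lemma nu_mc1_ne_np {t : ℝ} (ht0 : 0 ≤ t) (ht1 : t ≤ 1) : geo mC Rl t (-np) ≠ np := by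
  rw [geo, combmC_neg_np]
  exact nz_ne_np_of (V3_ne_zero (by intro h; apply denom_ne t; nlinarith))
    (by rw [V3_apply2]; linarith)

lemma nu_mc2_ne_np {t : ℝ} (ht0 : 0 ≤ t) (ht1 : t ≤ 1) : geo Rl id t (-np) ≠ np := by
  rw [geo]
  show nz ((1-t) • Rl (-np) + t • (-np)) ≠ np
  rw [combRlid_neg_np]
  exact nz_ne_np_of (V3_ne_zero (by intro h; apply denom_ne t; nlinarith))
    (by rw [V3_apply2]; linarith)

lemma nu_mw1_ne_neg_np {t : ℝ} (ht0 : 0 ≤ t) (ht1 : t ≤ 1) : geo mW Rl t np ≠ -np := by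
  rw [geo, combmW_np]
  exact nz_ne_neg_np_of (V3_ne_zero (by intro h; apply denom_ne t; nlinarith))
    (by rw [V3_apply2]; linarith)

lemma nu_mw2_ne_neg_np {t : ℝ} (ht0 : 0 ≤ t) (ht1 : t ≤ 1) : geo Rl id t np ≠ -np := by
  rw [geo]
  show nz ((1-t) • Rl np + t • np) ≠ -np
  rw [combRlid_np]
  exact nz_ne_neg_np_of (V3_ne_zero (by intro h; apply denom_ne t; nlinarith))
    (by rw [V3_apply2]; linarith)

/-! Nonvanishing of the geodesic combinations -/

lemma nv_mC {t : ℝ} {x : E3} (hx : nsq x = 1) (ht0 : 0 ≤ t) (ht1 : t ≤ 1) :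
    (1-t) • mC x + t • Rl x ≠ 0 :=
  geo_ne_zero (nsq_mC hx) (nsq_Rl hx) (mC_ne hx) ht0 ht1

lemma nv_mW {t : ℝ} {x : E3} (hx : nsq x = 1) (ht0 : 0 ≤ t) (ht1 : t ≤ 1) :
    (1-t) • mW x + t • Rl x ≠ 0 :=
  geo_ne_zero (nsq_mW hx) (nsq_Rl hx) (mW_ne hx) ht0 ht1

lemma nv_Rlid {t : ℝ} {x : E3} (hx : nsq x = 1) (ht0 : 0 ≤ t) (ht1 : t ≤ 1) :
    (1-t) • Rl x + t • (id x : E3) ≠ 0 :=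
  geo_ne_zero (nsq_Rl hx) hx (Rl_ne hx) ht0 ht1

lemma nv_dlT {t : ℝ} {x : E3} (hx : nsq x = 1) (ht0 : 0 ≤ t) (ht1 : t ≤ 1) :
    (1-t) • dlT x + t • (id x : E3) ≠ 0 :=
  geo_ne_zero (nsq_dlT hx) hx (dlT_ne hx) ht0 ht1

/-! Norms of the stage values -/

lemma nsq_mc1 {t : ℝ} {x : E3} (hx : nsq x = 1) (ht0 : 0 ≤ t) (ht1 : t ≤ 1) :
    nsq (mc1 t x) = 1 := by
  rw [mc1, nsq_Qc (nsq_geo' (nv_mC nsq_neg_np ht0 ht1))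
    (add_neg_np_ne (nu_mc1_ne_np ht0 ht1))]
  exact nsq_geo' (nv_mC hx ht0 ht1)

lemma nsq_mc2 {t : ℝ} {x : E3} (hx : nsq x = 1) (ht0 : 0 ≤ t) (ht1 : t ≤ 1) :
    nsq (mc2 t x) = 1 := by
  rw [mc2, nsq_Qc (nsq_geo' (nv_Rlid nsq_neg_np ht0 ht1))
    (add_neg_np_ne (nu_mc2_ne_np ht0 ht1))]
  exact nsq_geo' (nv_Rlid hx ht0 ht1)

lemma nsq_mw1 {t : ℝ} {x : E3} (hx : nsq x = 1) (ht0 : 0 ≤ t) (ht1 : t ≤ 1) :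
    nsq (mw1 t x) = 1 := by
  rw [mw1, nsq_Qc (nsq_geo' (nv_mW nsq_np ht0 ht1))
    (add_np_ne (nu_mw1_ne_neg_np ht0 ht1))]
  exact nsq_geo' (nv_mW hx ht0 ht1)

lemma nsq_mw2 {t : ℝ} {x : E3} (hx : nsq x = 1) (ht0 : 0 ≤ t) (ht1 : t ≤ 1) :
    nsq (mw2 t x) = 1 := by
  rw [mw2, nsq_Qc (nsq_geo' (nv_Rlid nsq_np ht0 ht1))
    (add_np_ne (nu_mw2_ne_neg_np ht0 ht1))]
  exact nsq_geo' (nv_Rlid hx ht0 ht1)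

/-! Endpoint values -/

lemma mc1_zero {x : E3} (hx : nsq x = 1) : mc1 0 x = mC x := by
  rw [mc1, geo_zero (nsq_mC nsq_neg_np), geo_zero (nsq_mC hx), mC_neg_np, Qc_id nsq_neg_np]

noncomputable def MCmid (x : E3) : E3 := Qc (V3 (-1) 0 0) (-np) (Rl x)
noncomputable def MWmid (x : E3) : E3 := Qc (V3 1 0 0) np (Rl x)

lemma mc1_one {x : E3} (hx : nsq x = 1) : mc1 1 x = MCmid x := by
  rw [mc1, geo_one (nsq_Rl nsq_neg_np), geo_one (nsq_Rl hx), Rl_neg_np, MCmid]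

lemma mc2_zero {x : E3} (hx : nsq x = 1) : mc2 0 x = MCmid x := by
  rw [mc2, geo_zero (nsq_Rl nsq_neg_np), geo_zero (nsq_Rl hx), Rl_neg_np, MCmid]

lemma mc2_one {x : E3} (hx : nsq x = 1) : mc2 1 x = x := by
  rw [mc2, geo_id_one nsq_neg_np, geo_id_one hx, Qc_id nsq_neg_np]

lemma mw1_zero {x : E3} (hx : nsq x = 1) : mw1 0 x = mW x := by
  rw [mw1, geo_zero (nsq_mW nsq_np), geo_zero (nsq_mW hx), mW_np, Qc_id nsq_np]

lemma mw1_one {x : E3} (hx : nsq x = 1) : mw1 1 x = MWmid x := by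
  rw [mw1, geo_one (nsq_Rl nsq_np), geo_one (nsq_Rl hx), Rl_np, MWmid]

lemma mw2_zero {x : E3} (hx : nsq x = 1) : mw2 0 x = MWmid x := by
  rw [mw2, geo_zero (nsq_Rl nsq_np), geo_zero (nsq_Rl hx), Rl_np, MWmid]

lemma mw2_one {x : E3} (hx : nsq x = 1) : mw2 1 x = x := by
  rw [mw2, geo_id_one nsq_np, geo_id_one hx, Qc_id nsq_np]

/-! Basepoint tracks -/

lemma mc1_base {t : ℝ} (ht0 : 0 ≤ t) (ht1 : t ≤ 1) : mc1 t (-np) = -np := by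
  rw [mc1]
  exact Qc_self (nsq_geo' (nv_mC nsq_neg_np ht0 ht1)) nsq_neg_np
    (add_neg_np_ne (nu_mc1_ne_np ht0 ht1))

lemma mc2_base {t : ℝ} (ht0 : 0 ≤ t) (ht1 : t ≤ 1) : mc2 t (-np) = -np := by
  rw [mc2]
  exact Qc_self (nsq_geo' (nv_Rlid nsq_neg_np ht0 ht1)) nsq_neg_np
    (add_neg_np_ne (nu_mc2_ne_np ht0 ht1))

lemma mw1_base {t : ℝ} (ht0 : 0 ≤ t) (ht1 : t ≤ 1) : mw1 t np = np := by
  rw [mw1]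
  exact Qc_self (nsq_geo' (nv_mW nsq_np ht0 ht1)) nsq_np
    (add_np_ne (nu_mw1_ne_neg_np ht0 ht1))

lemma mw2_base {t : ℝ} (ht0 : 0 ≤ t) (ht1 : t ≤ 1) : mw2 t np = np := by
  rw [mw2]
  exact Qc_self (nsq_geo' (nv_Rlid nsq_np ht0 ht1)) nsq_np
    (add_np_ne (nu_mw2_ne_neg_np ht0 ht1))

lemma mc2_track {t : ℝ} (ht0 : 0 ≤ t) (ht1 : t ≤ 1) : mc2 t np = np := by
  have harg : (1-t) • Rl np + t • (id np : E3) = -((1-t) • Rl (-np) + t • (id (-np) : E3)) := by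
    simp only [id_eq]
    rw [Rl_neg]
    module
  have h2 : geo Rl id t np = -(geo Rl id t (-np)) := by
    rw [geo, geo, harg, nz_neg]
  rw [mc2, h2, Qc_neg,
    Qc_self (nsq_geo' (nv_Rlid nsq_neg_np ht0 ht1)) nsq_neg_np
      (add_neg_np_ne (nu_mc2_ne_np ht0 ht1))]
  simp

/-! The main track identity: `mc1 t np = om t` -/

lemma nz_V3' {α γ : ℝ} (h : α^2 + γ^2 ≠ 0) :
    nz (V3 α 0 γ) = V3 (α/Real.sqrt (α^2+γ^2)) 0 (γ/Real.sqrt (α^2+γ^2)) := by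
  have hn : ‖V3 α 0 γ‖ = Real.sqrt (α^2+γ^2) := by
    rw [norm_eq_sqrt_nsq]
    congr 1
    simp [nsq]
  apply E3_ext <;> rw [nz_apply] <;> rw [hn] <;>
    simp only [V3_apply0, V3_apply1, V3_apply2] <;> ring

lemma mc1_track {t : ℝ} (ht0 : 0 ≤ t) (ht1 : t ≤ 1) : mc1 t np = om t := by
  have hd : (0:ℝ) < t^2 + (1-t)^2 := om_denom_pos t
  obtain ⟨n, hndef⟩ : ∃ n : ℝ, n = Real.sqrt (t^2 + (1-t)^2) := ⟨_, rfl⟩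
  have hn2 : n^2 = t^2 + (1-t)^2 := by rw [hndef]; exact Real.sq_sqrt hd.le
  have hnpos : 0 < n := by rw [hndef]; exact Real.sqrt_pos.2 hd
  have hn0 : n ≠ 0 := hnpos.ne'
  obtain ⟨a, hadef⟩ : ∃ a : ℝ, a = (1-t)/n := ⟨_, rfl⟩
  obtain ⟨b, hbdef⟩ : ∃ b : ℝ, b = t/n := ⟨_, rfl⟩
  have hab : a^2 + b^2 = 1 := by
    rw [hadef, hbdef]
    field_simp
    rw [hn2]; ring
  have ha : 0 ≤ a := by rw [hadef]; exact div_nonneg (by linarith) hnpos.le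
  have hnu : geo mC Rl t (-np) = V3 (-b) 0 (-a) := by
    rw [geo, combmC_neg_np, nz_V3' (by intro h; apply denom_ne t; nlinarith)]
    have hsq : (-t)^2 + (-(1-t))^2 = t^2 + (1-t)^2 := by ring
    rw [hsq]
    refine E3_ext ?_ rfl ?_
    · simp only [V3_apply0]; rw [hbdef, hndef]; ring
    · simp only [V3_apply2]; rw [hadef, hndef]; ring
  have hx : geo mC Rl t np = V3 b 0 (-a) := by
    rw [geo, combmC_np, nz_V3' (by intro h; apply denom_ne t; nlinarith)]
    have hsq : t^2 + (-(1-t))^2 = t^2 + (1-t)^2 := by ring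
    rw [hsq]
    refine E3_ext ?_ rfl ?_
    · simp only [V3_apply0]; rw [hbdef, hndef]
    · simp only [V3_apply2]; rw [hadef, hndef]; ring
  rw [mc1, hnu, hx, track hab ha]
  refine E3_ext ?_ rfl ?_
  · simp only [om, V3_apply0]
    rw [hadef, hbdef]
    field_simp
    rw [hn2]
  · simp only [om, V3_apply2]
    rw [hadef, hbdef]
    field_simp
    rw [hn2]; ring

end SpringerAux

namespace SpringerAux
open Set Metric

/-! ### `ContinuousOn` combinators -/

def D2 : Set (ℝ × E3) := (Icc (0:ℝ) 1) ×ˢ {x : E3 | nsq x = 1}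

lemma contOn_nz {α : Type*} [TopologicalSpace α] {s : Set α} {f : α → E3}
    (hf : ContinuousOn f s) (h : ∀ p ∈ s, f p ≠ 0) :
    ContinuousOn (fun p => nz (f p)) s := by
  show ContinuousOn (fun p => ‖f p‖⁻¹ • f p) s
  exact ((continuous_norm.comp_continuousOn hf).inv₀
    fun p hp => norm_ne_zero_iff.2 (h p hp)).smul hf

lemma contOn_dot {α : Type*} [TopologicalSpace α] {s : Set α} {f g : α → E3}
    (hf : ContinuousOn f s) (hg : ContinuousOn g s) :
    ContinuousOn (fun p => dot (f p) (g p)) s := by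
  show ContinuousOn (fun p => (f p 0)*(g p 0) + (f p 1)*(g p 1) + (f p 2)*(g p 2)) s
  have c : ∀ (i : Fin 3) {h : α → E3}, ContinuousOn h s → ContinuousOn (fun p => h p i) s :=
    fun i h hh => (contc i).comp_continuousOn hh
  exact (((c 0 hf).mul (c 0 hg)).add ((c 1 hf).mul (c 1 hg))).add ((c 2 hf).mul (c 2 hg))

lemma contOn_rfl3 {α : Type*} [TopologicalSpace α] {s : Set α} {f g : α → E3}
    (hf : ContinuousOn f s) (hg : ContinuousOn g s) :
    ContinuousOn (fun p => rfl3 (f p) (g p)) s := by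
  show ContinuousOn (fun p => g p - (2 * dot (f p) (g p)) • f p) s
  exact hg.sub ((continuousOn_const.mul (contOn_dot hf hg)).smul hf)

lemma contOn_Qc {α : Type*} [TopologicalSpace α] {s : Set α} {v h : α → E3} {q : E3}
    (hv : ContinuousOn v s) (hh : ContinuousOn h s) (hne : ∀ p ∈ s, v p + q ≠ 0) :
    ContinuousOn (fun p => Qc (v p) q (h p)) s := by
  show ContinuousOn (fun p => rfl3 (nz (v p + q)) (rfl3 (v p) (h p))) s
  exact contOn_rfl3 (contOn_nz (hv.add continuousOn_const) hne) (contOn_rfl3 hv hh)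

lemma contOn_geo {f g : E3 → E3} (hf : Continuous f) (hg : Continuous g)
    (hfu : ∀ {x : E3}, nsq x = 1 → nsq (f x) = 1) (hgu : ∀ {x : E3}, nsq x = 1 → nsq (g x) = 1)
    (hna : ∀ {x : E3}, nsq x = 1 → f x ≠ -(g x)) :
    ContinuousOn (fun p : ℝ × E3 => geo f g p.1 p.2) D2 := by
  show ContinuousOn (fun p : ℝ × E3 => nz ((1-p.1) • f p.2 + p.1 • g p.2)) D2
  apply contOn_nz
  · exact (((continuous_const.sub continuous_fst).smul (hf.comp continuous_snd)).add
      (continuous_fst.smul (hg.comp continuous_snd))).continuousOn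
  · exact fun p hp => geo_ne_zero (hfu hp.2) (hgu hp.2) (hna hp.2) hp.1.1 hp.1.2

lemma contOn_geo_const {f g : E3 → E3} {z : E3}
    (hne : ∀ (t : ℝ), 0 ≤ t → t ≤ 1 → (1-t) • f z + t • g z ≠ 0) :
    ContinuousOn (fun p : ℝ × E3 => geo f g p.1 z) D2 := by
  show ContinuousOn (fun p : ℝ × E3 => nz ((1-p.1) • f z + p.1 • g z)) D2
  apply contOn_nz
  · exact (((continuous_const.sub continuous_fst).smul continuous_const).add
      (continuous_fst.smul continuous_const)).continuousOn
  · exact fun p hp => hne p.1 hp.1.1 hp.1.2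

/-! Stage continuity -/

lemma contOn_mc1 : ContinuousOn (fun p : ℝ × E3 => mc1 p.1 p.2) D2 := by
  show ContinuousOn (fun p : ℝ × E3 =>
    Qc (geo mC Rl p.1 (-np)) (-np) (geo mC Rl p.1 p.2)) D2
  exact contOn_Qc (contOn_geo_const fun t h0 h1 => nv_mC nsq_neg_np h0 h1)
    (contOn_geo continuous_mC continuous_Rl (fun h => nsq_mC h) (fun h => nsq_Rl h)
      (fun h => mC_ne h))
    (fun p hp => add_neg_np_ne (nu_mc1_ne_np hp.1.1 hp.1.2))

lemma contOn_mc2 : ContinuousOn (fun p : ℝ × E3 => mc2 p.1 p.2) D2 := by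
  show ContinuousOn (fun p : ℝ × E3 =>
    Qc (geo Rl id p.1 (-np)) (-np) (geo Rl id p.1 p.2)) D2
  exact contOn_Qc (contOn_geo_const fun t h0 h1 => nv_Rlid nsq_neg_np h0 h1)
    (contOn_geo continuous_Rl continuous_id (fun h => nsq_Rl h) (fun h => h)
      (fun h => Rl_ne h))
    (fun p hp => add_neg_np_ne (nu_mc2_ne_np hp.1.1 hp.1.2))

lemma contOn_mw1 : ContinuousOn (fun p : ℝ × E3 => mw1 p.1 p.2) D2 := by
  show ContinuousOn (fun p : ℝ × E3 =>
    Qc (geo mW Rl p.1 np) np (geo mW Rl p.1 p.2)) D2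
  exact contOn_Qc (contOn_geo_const fun t h0 h1 => nv_mW nsq_np h0 h1)
    (contOn_geo continuous_mW continuous_Rl (fun h => nsq_mW h) (fun h => nsq_Rl h)
      (fun h => mW_ne h))
    (fun p hp => add_np_ne (nu_mw1_ne_neg_np hp.1.1 hp.1.2))

lemma contOn_mw2 : ContinuousOn (fun p : ℝ × E3 => mw2 p.1 p.2) D2 := by
  show ContinuousOn (fun p : ℝ × E3 =>
    Qc (geo Rl id p.1 np) np (geo Rl id p.1 p.2)) D2
  exact contOn_Qc (contOn_geo_const fun t h0 h1 => nv_Rlid nsq_np h0 h1)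
    (contOn_geo continuous_Rl continuous_id (fun h => nsq_Rl h) (fun h => h)
      (fun h => Rl_ne h))
    (fun p hp => add_np_ne (nu_mw2_ne_neg_np hp.1.1 hp.1.2))

lemma contOn_geo_dlT : ContinuousOn (fun p : ℝ × E3 => geo dlT id p.1 p.2) D2 :=
  contOn_geo continuous_dlT continuous_id (fun h => nsq_dlT h) (fun h => h)
    (fun h => dlT_ne h)

end SpringerAux

namespace SpringerAux
open Set Metric Classical

/-! ### Chain-side homotopy stages (ambient) -/

noncomputable def KX1 (p : ℝ × (Fin 4 → E3)) : Fin 4 → E3 :=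
  if p.2 ∈ Sa then p.2
  else if p.2 ∈ Sb then Phi1 (mc1 p.1 (p.2 1))
  else if 0 ≤ p.2 2 2 then Phi1 (om (min 1 (2 - 2*(p.2 2 2) + p.1*(p.2 2 2))))
  else Phi2 (dl (p.2 2))

noncomputable def KX2 (p : ℝ × (Fin 4 → E3)) : Fin 4 → E3 :=
  if p.2 ∈ Sa then p.2
  else if p.2 ∈ Sb then Phi1 (mc2 p.1 (p.2 1))
  else if 0 ≤ p.2 2 2 then Phi1 (om (min 1 (2 - (p.2 2 2) + p.1*(p.2 2 2))))
  else Phi2 (dl (p.2 2))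

noncomputable def KX3 (p : ℝ × (Fin 4 → E3)) : Fin 4 → E3 :=
  if p.2 ∈ Sa then p.2
  else if p.2 ∈ Sb then p.2
  else Phi2 (geo dlT id p.1 (p.2 2))

def DX : Set (ℝ × (Fin 4 → E3)) := (Icc (0:ℝ) 1) ×ˢ X31

/-! Branch value lemmas -/

lemma qab_coord {y : Fin 4 → E3} (ha : y ∈ Sa) (hb : y ∈ Sb) : y 1 = -np := by
  rw [← ha.2.1]; exact hb.2.1

lemma qbc_coord1 {y : Fin 4 → E3} (hb : y ∈ Sb) (hc : y ∈ Sc) : y 1 = np := hc.2.2.1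

lemma qbc_coord2 {y : Fin 4 → E3} (hb : y ∈ Sb) (hc : y ∈ Sc) : y 2 = np := by
  rw [← hb.2.2.1]; exact hc.2.2.1

lemma not_Sa_of_Sc {y : Fin 4 → E3} (hc : y ∈ Sc) : y ∉ Sa := by
  intro ha
  have : y ∈ Sa ∩ Sc := ⟨ha, hc⟩
  rw [Sa_inter_Sc] at this
  exact this

lemma KX1_Sa {p : ℝ × (Fin 4 → E3)} (h : p.2 ∈ Sa) : KX1 p = p.2 := if_pos h
lemma KX2_Sa {p : ℝ × (Fin 4 → E3)} (h : p.2 ∈ Sa) : KX2 p = p.2 := if_pos h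
lemma KX3_Sa {p : ℝ × (Fin 4 → E3)} (h : p.2 ∈ Sa) : KX3 p = p.2 := if_pos h

lemma KX1_Sb {p : ℝ × (Fin 4 → E3)} (ht0 : 0 ≤ p.1) (ht1 : p.1 ≤ 1) (h : p.2 ∈ Sb) :
    KX1 p = Phi1 (mc1 p.1 (p.2 1)) := by
  unfold KX1
  by_cases ha : p.2 ∈ Sa
  · rw [if_pos ha, qab_coord ha h, mc1_base ht0 ht1, ← qab_coord ha h]
    exact Sb_eq_Phi1 h
  · rw [if_neg ha, if_pos h]

lemma KX2_Sb {p : ℝ × (Fin 4 → E3)} (ht0 : 0 ≤ p.1) (ht1 : p.1 ≤ 1) (h : p.2 ∈ Sb) :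
    KX2 p = Phi1 (mc2 p.1 (p.2 1)) := by
  unfold KX2
  by_cases ha : p.2 ∈ Sa
  · rw [if_pos ha, qab_coord ha h, mc2_base ht0 ht1, ← qab_coord ha h]
    exact Sb_eq_Phi1 h
  · rw [if_neg ha, if_pos h]

lemma KX3_Sb {p : ℝ × (Fin 4 → E3)} (h : p.2 ∈ Sb) : KX3 p = p.2 := by
  unfold KX3
  by_cases ha : p.2 ∈ Sa
  · rw [if_pos ha]
  · rw [if_neg ha, if_pos h]

lemma KX1_Sc {p : ℝ × (Fin 4 → E3)} (ht0 : 0 ≤ p.1) (ht1 : p.1 ≤ 1) (h : p.2 ∈ Sc) :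
    KX1 p = if 0 ≤ p.2 2 2 then Phi1 (om (min 1 (2 - 2*(p.2 2 2) + p.1*(p.2 2 2))))
      else Phi2 (dl (p.2 2)) := by
  unfold KX1
  rw [if_neg (not_Sa_of_Sc h)]
  by_cases hb : p.2 ∈ Sb
  · rw [if_pos hb, qbc_coord1 hb h, mc1_track ht0 ht1, qbc_coord2 hb h]
    rw [if_pos (by rw [np_apply2]; norm_num : (0:ℝ) ≤ (np:E3) 2), np_apply2]
    have harg : (2:ℝ) - 2*1 + p.1*1 = p.1 := by ring
    rw [harg, min_eq_right ht1]
  · rw [if_neg hb]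

lemma KX2_Sc {p : ℝ × (Fin 4 → E3)} (ht0 : 0 ≤ p.1) (ht1 : p.1 ≤ 1) (h : p.2 ∈ Sc) :
    KX2 p = if 0 ≤ p.2 2 2 then Phi1 (om (min 1 (2 - (p.2 2 2) + p.1*(p.2 2 2))))
      else Phi2 (dl (p.2 2)) := by
  unfold KX2
  rw [if_neg (not_Sa_of_Sc h)]
  by_cases hb : p.2 ∈ Sb
  · rw [if_pos hb, qbc_coord1 hb h, mc2_track ht0 ht1, qbc_coord2 hb h]
    rw [if_pos (by rw [np_apply2]; norm_num : (0:ℝ) ≤ (np:E3) 2), np_apply2]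
    have harg : (2:ℝ) - 1 + p.1*1 = 1 + p.1 := by ring
    rw [harg, min_eq_left (by linarith), om_one]
  · rw [if_neg hb]

lemma KX3_Sc {p : ℝ × (Fin 4 → E3)} (ht0 : 0 ≤ p.1) (ht1 : p.1 ≤ 1) (h : p.2 ∈ Sc) :
    KX3 p = Phi2 (geo dlT id p.1 (p.2 2)) := by
  unfold KX3
  rw [if_neg (not_Sa_of_Sc h)]
  by_cases hb : p.2 ∈ Sb
  · rw [if_pos hb]
    have h22 : p.2 2 = np := qbc_coord2 hb h
    rw [h22]
    have h1 : geo dlT id p.1 np = np := by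
      have h2 := geo_of_eq (f := dlT) (g := id) (x := np)
        (by rw [dlT_np]; rfl) (by rw [dlT_np]; exact nsq_np) p.1
      rw [h2, dlT_np]
    rw [h1, Sc_eq_Phi2 h, h22]
  · rw [if_neg hb]

/-! Membership -/

lemma Sc_of_X31 {y : Fin 4 → E3} (hy : y ∈ X31) (ha : y ∉ Sa) (hb : y ∉ Sb) : y ∈ Sc := by
  rcases hy with (h | h) | h
  · exact absurd h ha
  · exact absurd h hb
  · exact h

lemma KX1_mem {p : ℝ × (Fin 4 → E3)} (hp : p ∈ DX) : KX1 p ∈ X31 := by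
  unfold KX1
  split_ifs with h1 h2 h3
  · exact hp.2
  · exact mem_X31_of_Sb (Phi1_mem_Sb (nsq_mc1 (Sb_nsq h2) hp.1.1 hp.1.2))
  · exact mem_X31_of_Sb (Phi1_mem_Sb (nsq_om _))
  · exact mem_X31_of_Sc (Phi2_mem_Sc (nsq_dl (Sc_nsq (Sc_of_X31 hp.2 h1 h2))))

lemma KX2_mem {p : ℝ × (Fin 4 → E3)} (hp : p ∈ DX) : KX2 p ∈ X31 := by
  unfold KX2
  split_ifs with h1 h2 h3
  · exact hp.2
  · exact mem_X31_of_Sb (Phi1_mem_Sb (nsq_mc2 (Sb_nsq h2) hp.1.1 hp.1.2))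
  · exact mem_X31_of_Sb (Phi1_mem_Sb (nsq_om _))
  · exact mem_X31_of_Sc (Phi2_mem_Sc (nsq_dl (Sc_nsq (Sc_of_X31 hp.2 h1 h2))))

lemma KX3_mem {p : ℝ × (Fin 4 → E3)} (hp : p ∈ DX) : KX3 p ∈ X31 := by
  unfold KX3
  split_ifs with h1 h2
  · exact hp.2
  · exact hp.2
  · apply mem_X31_of_Sc
    apply Phi2_mem_Sc
    exact nsq_geo' (nv_dlT (Sc_nsq (Sc_of_X31 hp.2 h1 h2)) hp.1.1 hp.1.2)

/-! Continuity -/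

lemma contOn_Sc_tail1 : Continuous (fun p : ℝ × (Fin 4 → E3) =>
    if 0 ≤ p.2 2 2 then Phi1 (om (min 1 (2 - 2*(p.2 2 2) + p.1*(p.2 2 2))))
    else Phi2 (dl (p.2 2))) := by
  have hc22 : Continuous fun p : ℝ × (Fin 4 → E3) => p.2 2 2 :=
    (contc 2).comp ((continuous_apply 2).comp continuous_snd)
  apply Continuous.if_le _ _ continuous_const hc22
  · intro p hp
    rw [← hp]
    have h1 : (2:ℝ) - 2*0 + p.1*0 = 2 := by ring
    rw [h1, min_eq_left (by norm_num), om_one, dl_x2_zero hp.symm, Phi1_np_eq_Phi2]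
  · apply continuous_Phi1_comp
    apply continuous_om.comp
    apply continuous_const.min
    have : Continuous fun p : ℝ × (Fin 4 → E3) => p.1 := continuous_fst
    continuity
  · exact continuous_Phi2_comp (continuous_dl.comp ((continuous_apply 2).comp continuous_snd))

lemma contOn_Sc_tail2 : Continuous (fun p : ℝ × (Fin 4 → E3) =>
    if 0 ≤ p.2 2 2 then Phi1 (om (min 1 (2 - (p.2 2 2) + p.1*(p.2 2 2))))
    else Phi2 (dl (p.2 2))) := by
  have hc22 : Continuous fun p : ℝ × (Fin 4 → E3) => p.2 2 2 :=
    (contc 2).comp ((continuous_apply 2).comp continuous_snd)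
  apply Continuous.if_le _ _ continuous_const hc22
  · intro p hp
    rw [← hp]
    have h1 : (2:ℝ) - 0 + p.1*0 = 2 := by ring
    rw [h1, min_eq_left (by norm_num), om_one, dl_x2_zero hp.symm, Phi1_np_eq_Phi2]
  · apply continuous_Phi1_comp
    apply continuous_om.comp
    apply continuous_const.min
    have : Continuous fun p : ℝ × (Fin 4 → E3) => p.1 := continuous_fst
    continuity
  · exact continuous_Phi2_comp (continuous_dl.comp ((continuous_apply 2).comp continuous_snd))

lemma reindex_cont : Continuous (fun p : ℝ × (Fin 4 → E3) => (p.1, p.2 1)) :=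
  continuous_fst.prodMk ((continuous_apply 1).comp continuous_snd)

lemma reindex2_cont : Continuous (fun p : ℝ × (Fin 4 → E3) => (p.1, p.2 2)) :=
  continuous_fst.prodMk ((continuous_apply 2).comp continuous_snd)

lemma contOn_KX1 : ContinuousOn KX1 DX := by
  have hSa : ContinuousOn KX1 ((Icc (0:ℝ) 1) ×ˢ Sa) :=
    ContinuousOn.congr continuous_snd.continuousOn (fun p hp => KX1_Sa hp.2)
  have hSb : ContinuousOn KX1 ((Icc (0:ℝ) 1) ×ˢ Sb) := by
    apply ContinuousOn.congr (f := fun p : ℝ × (Fin 4 → E3) => Phi1 (mc1 p.1 (p.2 1)))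
    · have inner : ContinuousOn (fun p : ℝ × (Fin 4 → E3) => mc1 p.1 (p.2 1))
          ((Icc (0:ℝ) 1) ×ˢ Sb) := by
        apply contOn_mc1.comp reindex_cont.continuousOn
        intro p hp
        exact ⟨hp.1, Sb_nsq hp.2⟩
      exact (continuous_Phi1_comp continuous_id).comp_continuousOn inner
    · exact fun p hp => KX1_Sb hp.1.1 hp.1.2 hp.2
  have hSc : ContinuousOn KX1 ((Icc (0:ℝ) 1) ×ˢ Sc) := by
    apply ContinuousOn.congr contOn_Sc_tail1.continuousOn
    exact fun p hp => KX1_Sc hp.1.1 hp.1.2 hp.2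
  have hcover : DX = ((Icc (0:ℝ) 1) ×ˢ Sa ∪ (Icc (0:ℝ) 1) ×ˢ Sb) ∪ (Icc (0:ℝ) 1) ×ˢ Sc := by
    unfold DX X31
    rw [Set.prod_union, Set.prod_union]
  rw [hcover]
  exact contOn_union
    (IsClosed.union (isClosed_Icc.prod isClosed_Sa) (isClosed_Icc.prod isClosed_Sb))
    (isClosed_Icc.prod isClosed_Sc)
    (contOn_union (isClosed_Icc.prod isClosed_Sa) (isClosed_Icc.prod isClosed_Sb) hSa hSb) hSc

lemma contOn_KX2 : ContinuousOn KX2 DX := by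
  have hSa : ContinuousOn KX2 ((Icc (0:ℝ) 1) ×ˢ Sa) :=
    ContinuousOn.congr continuous_snd.continuousOn (fun p hp => KX2_Sa hp.2)
  have hSb : ContinuousOn KX2 ((Icc (0:ℝ) 1) ×ˢ Sb) := by
    apply ContinuousOn.congr (f := fun p : ℝ × (Fin 4 → E3) => Phi1 (mc2 p.1 (p.2 1)))
    · have inner : ContinuousOn (fun p : ℝ × (Fin 4 → E3) => mc2 p.1 (p.2 1))
          ((Icc (0:ℝ) 1) ×ˢ Sb) := by
        apply contOn_mc2.comp reindex_cont.continuousOn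
        intro p hp
        exact ⟨hp.1, Sb_nsq hp.2⟩
      exact (continuous_Phi1_comp continuous_id).comp_continuousOn inner
    · exact fun p hp => KX2_Sb hp.1.1 hp.1.2 hp.2
  have hSc : ContinuousOn KX2 ((Icc (0:ℝ) 1) ×ˢ Sc) := by
    apply ContinuousOn.congr contOn_Sc_tail2.continuousOn
    exact fun p hp => KX2_Sc hp.1.1 hp.1.2 hp.2
  have hcover : DX = ((Icc (0:ℝ) 1) ×ˢ Sa ∪ (Icc (0:ℝ) 1) ×ˢ Sb) ∪ (Icc (0:ℝ) 1) ×ˢ Sc := by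
    unfold DX X31
    rw [Set.prod_union, Set.prod_union]
  rw [hcover]
  exact contOn_union
    (IsClosed.union (isClosed_Icc.prod isClosed_Sa) (isClosed_Icc.prod isClosed_Sb))
    (isClosed_Icc.prod isClosed_Sc)
    (contOn_union (isClosed_Icc.prod isClosed_Sa) (isClosed_Icc.prod isClosed_Sb) hSa hSb) hSc

lemma contOn_KX3 : ContinuousOn KX3 DX := by
  have hSa : ContinuousOn KX3 ((Icc (0:ℝ) 1) ×ˢ Sa) :=
    ContinuousOn.congr continuous_snd.continuousOn (fun p hp => KX3_Sa hp.2)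
  have hSb : ContinuousOn KX3 ((Icc (0:ℝ) 1) ×ˢ Sb) :=
    ContinuousOn.congr continuous_snd.continuousOn (fun p hp => KX3_Sb hp.2)
  have hSc : ContinuousOn KX3 ((Icc (0:ℝ) 1) ×ˢ Sc) := by
    apply ContinuousOn.congr (f := fun p : ℝ × (Fin 4 → E3) => Phi2 (geo dlT id p.1 (p.2 2)))
    · have inner : ContinuousOn (fun p : ℝ × (Fin 4 → E3) => geo dlT id p.1 (p.2 2))
          ((Icc (0:ℝ) 1) ×ˢ Sc) := by
        apply contOn_geo_dlT.comp reindex2_cont.continuousOn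
        intro p hp
        exact ⟨hp.1, Sc_nsq hp.2⟩
      exact (continuous_Phi2_comp continuous_id).comp_continuousOn inner
    · exact fun p hp => KX3_Sc hp.1.1 hp.1.2 hp.2
  have hcover : DX = ((Icc (0:ℝ) 1) ×ˢ Sa ∪ (Icc (0:ℝ) 1) ×ˢ Sb) ∪ (Icc (0:ℝ) 1) ×ˢ Sc := by
    unfold DX X31
    rw [Set.prod_union, Set.prod_union]
  rw [hcover]
  exact contOn_union
    (IsClosed.union (isClosed_Icc.prod isClosed_Sa) (isClosed_Icc.prod isClosed_Sb))
    (isClosed_Icc.prod isClosed_Sc)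
    (contOn_union (isClosed_Icc.prod isClosed_Sa) (isClosed_Icc.prod isClosed_Sb) hSa hSb) hSc

/-! Endpoint identities -/

lemma KX1_zero {y : Fin 4 → E3} (hy : y ∈ X31) : KX1 (0, y) = G0 (F0 y) := by
  rcases hy with (h | h) | h
  · rw [KX1_Sa (p := (0, y)) h, GF_Sa h]
  · rw [KX1_Sb (p := (0, y)) le_rfl zero_le_one h, GF_Sb h]
    show Phi1 (mc1 0 (y 1)) = _
    rw [mc1_zero (Sb_nsq h)]
  · rw [KX1_Sc (p := (0, y)) le_rfl zero_le_one h, GF_Sc h]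
    show (if 0 ≤ y 2 2 then Phi1 (om (min 1 (2 - 2*(y 2 2) + 0*(y 2 2)))) else Phi2 (dl (y 2)))
      = tongue (y 2)
    unfold tongue cpath
    by_cases h2 : 0 ≤ y 2 2
    · rw [if_pos h2, if_pos h2]
      have harg : (2:ℝ) - 2*(y 2 2) + 0*(y 2 2) = 2 - 2*(y 2 2) := by ring
      rw [harg]
    · rw [if_neg h2, if_neg h2]

lemma KX1_one_eq_KX2_zero {y : Fin 4 → E3} (hy : y ∈ X31) : KX1 (1, y) = KX2 (0, y) := by
  rcases hy with (h | h) | h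
  · rw [KX1_Sa (p := (1, y)) h, KX2_Sa (p := (0, y)) h]
  · rw [KX1_Sb (p := (1, y)) zero_le_one le_rfl h, KX2_Sb (p := (0, y)) le_rfl zero_le_one h]
    show Phi1 (mc1 1 (y 1)) = Phi1 (mc2 0 (y 1))
    rw [mc1_one (Sb_nsq h), mc2_zero (Sb_nsq h)]
  · rw [KX1_Sc (p := (1, y)) zero_le_one le_rfl h, KX2_Sc (p := (0, y)) le_rfl zero_le_one h]
    by_cases h2 : 0 ≤ y 2 2
    · rw [if_pos h2, if_pos h2]
      have harg : (2:ℝ) - 2*(y 2 2) + 1*(y 2 2) = 2 - (y 2 2) + 0*(y 2 2) := by ring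
      rw [harg]
    · rw [if_neg h2, if_neg h2]

lemma KX2_one_eq_KX3_zero {y : Fin 4 → E3} (hy : y ∈ X31) : KX2 (1, y) = KX3 (0, y) := by
  rcases hy with (h | h) | h
  · rw [KX2_Sa (p := (1, y)) h, KX3_Sa (p := (0, y)) h]
  · rw [KX2_Sb (p := (1, y)) zero_le_one le_rfl h, KX3_Sb (p := (0, y)) h]
    show Phi1 (mc2 1 (y 1)) = y
    rw [mc2_one (Sb_nsq h)]
    exact (Sb_eq_Phi1 h).symm
  · rw [KX2_Sc (p := (1, y)) zero_le_one le_rfl h, KX3_Sc (p := (0, y)) le_rfl zero_le_one h]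
    show _ = Phi2 (geo dlT id 0 (y 2))
    rw [geo_zero (nsq_dlT (Sc_nsq h))]
    unfold dlT
    by_cases h2 : 0 ≤ y 2 2
    · rw [if_pos h2, if_pos h2]
      have harg : (2:ℝ) - (y 2 2) + 1*(y 2 2) = 2 := by ring
      rw [harg, min_eq_left (by norm_num), om_one, Phi1_np_eq_Phi2]
    · rw [if_neg h2, if_neg h2]

lemma KX3_one {y : Fin 4 → E3} (hy : y ∈ X31) : KX3 (1, y) = y := by
  rcases hy with (h | h) | h
  · exact KX3_Sa (p := (1, y)) h
  · exact KX3_Sb (p := (1, y)) h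
  · rw [KX3_Sc (p := (1, y)) zero_le_one le_rfl h]
    show Phi2 (geo dlT id 1 (y 2)) = y
    rw [geo_id_one (Sc_nsq h)]
    exact (Sc_eq_Phi2 h).symm

end SpringerAux

namespace SpringerAux
open Set Metric Classical

/-! ### Wedge-side homotopy stages (ambient) -/

noncomputable def KW1 (p : ℝ × E3) : E3 :=
  if p.2 ∈ S1 then p.2
  else if p.2 ∈ S2 then (2:ℝ) • (np - mw1 p.1 (np - (2:ℝ)⁻¹ • p.2))
  else (3:ℝ) • (np - dlT (np - (3:ℝ)⁻¹ • p.2))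

noncomputable def KW2 (p : ℝ × E3) : E3 :=
  if p.2 ∈ S1 then p.2
  else if p.2 ∈ S2 then (2:ℝ) • (np - mw2 p.1 (np - (2:ℝ)⁻¹ • p.2))
  else (3:ℝ) • (np - geo dlT id p.1 (np - (3:ℝ)⁻¹ • p.2))

def DW : Set (ℝ × E3) := (Icc (0:ℝ) 1) ×ˢ WS

lemma S3_of_WS {w : E3} (hw : w ∈ WS) (h1 : w ∉ S1) (h2 : w ∉ S2) : w ∈ S3 := by
  rcases hw with (h | h) | h
  · exact absurd h h1
  · exact absurd h h2
  · exact h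

lemma KW1_S1 {p : ℝ × E3} (h : p.2 ∈ S1) : KW1 p = p.2 := if_pos h
lemma KW2_S1 {p : ℝ × E3} (h : p.2 ∈ S1) : KW2 p = p.2 := if_pos h

lemma KW1_S2 {p : ℝ × E3} (ht0 : 0 ≤ p.1) (ht1 : p.1 ≤ 1) (h : p.2 ∈ S2) :
    KW1 p = (2:ℝ) • (np - mw1 p.1 (np - (2:ℝ)⁻¹ • p.2)) := by
  unfold KW1
  by_cases h1 : p.2 ∈ S1
  · rw [if_pos h1, S1_inter_S2 h1 h]
    rw [smul_zero, sub_zero, mw1_base ht0 ht1, sub_self, smul_zero]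
  · rw [if_neg h1, if_pos h]

lemma KW2_S2 {p : ℝ × E3} (ht0 : 0 ≤ p.1) (ht1 : p.1 ≤ 1) (h : p.2 ∈ S2) :
    KW2 p = (2:ℝ) • (np - mw2 p.1 (np - (2:ℝ)⁻¹ • p.2)) := by
  unfold KW2
  by_cases h1 : p.2 ∈ S1
  · rw [if_pos h1, S1_inter_S2 h1 h]
    rw [smul_zero, sub_zero, mw2_base ht0 ht1, sub_self, smul_zero]
  · rw [if_neg h1, if_pos h]

lemma KW1_S3 {p : ℝ × E3} (h : p.2 ∈ S3) :
    KW1 p = (3:ℝ) • (np - dlT (np - (3:ℝ)⁻¹ • p.2)) := by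
  unfold KW1
  by_cases h1 : p.2 ∈ S1
  · rw [if_pos h1, S1_inter_S3 h1 h]
    rw [smul_zero, sub_zero, dlT_np, sub_self, smul_zero]
  · have h2 : p.2 ∉ S2 := fun h2 => h1 (S2_inter_S3 h2 h ▸ zero_mem_S1)
    rw [if_neg h1, if_neg h2]

lemma KW2_S3 {p : ℝ × E3} (ht0 : 0 ≤ p.1) (ht1 : p.1 ≤ 1) (h : p.2 ∈ S3) :
    KW2 p = (3:ℝ) • (np - geo dlT id p.1 (np - (3:ℝ)⁻¹ • p.2)) := by
  unfold KW2
  by_cases h1 : p.2 ∈ S1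
  · rw [if_pos h1, S1_inter_S3 h1 h]
    have hgeo : geo dlT id p.1 np = np := by
      have h2 := geo_of_eq (f := dlT) (g := id) (x := np)
        (by rw [dlT_np]; rfl) (by rw [dlT_np]; exact nsq_np) p.1
      rw [h2, dlT_np]
    rw [smul_zero, sub_zero, hgeo, sub_self, smul_zero]
  · have h2 : p.2 ∉ S2 := fun h2 => h1 (S2_inter_S3 h2 h ▸ zero_mem_S1)
    rw [if_neg h1, if_neg h2]

/-! Membership -/

lemma KW1_mem {p : ℝ × E3} (hp : p ∈ DW) : KW1 p ∈ WS := by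
  unfold KW1
  split_ifs with h1 h2
  · exact hp.2
  · exact mem_WS_S2 (smul_np_mem two_pos (nsq_mw1 (coord_S2 h2) hp.1.1 hp.1.2))
  · exact mem_WS_S3 (smul_np_mem three_pos
      (nsq_dlT (coord_S3 (S3_of_WS hp.2 h1 h2))))

lemma KW2_mem {p : ℝ × E3} (hp : p ∈ DW) : KW2 p ∈ WS := by
  unfold KW2
  split_ifs with h1 h2
  · exact hp.2
  · exact mem_WS_S2 (smul_np_mem two_pos (nsq_mw2 (coord_S2 h2) hp.1.1 hp.1.2))
  · exact mem_WS_S3 (smul_np_mem three_pos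
      (nsq_geo' (nv_dlT (coord_S3 (S3_of_WS hp.2 h1 h2)) hp.1.1 hp.1.2)))

/-! Continuity -/

lemma reindexW2_cont : Continuous (fun p : ℝ × E3 => (p.1, np - (2:ℝ)⁻¹ • p.2)) :=
  continuous_fst.prodMk (continuous_const.sub ((continuous_const (y := (2:ℝ)⁻¹)).smul continuous_snd))

lemma reindexW3_cont : Continuous (fun p : ℝ × E3 => (p.1, np - (3:ℝ)⁻¹ • p.2)) :=
  continuous_fst.prodMk (continuous_const.sub ((continuous_const (y := (3:ℝ)⁻¹)).smul continuous_snd))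

lemma contOn_KW1 : ContinuousOn KW1 DW := by
  have hS1 : ContinuousOn KW1 ((Icc (0:ℝ) 1) ×ˢ S1) :=
    ContinuousOn.congr continuous_snd.continuousOn (fun p hp => KW1_S1 hp.2)
  have hS2 : ContinuousOn KW1 ((Icc (0:ℝ) 1) ×ˢ S2) := by
    apply ContinuousOn.congr
      (f := fun p : ℝ × E3 => (2:ℝ) • (np - mw1 p.1 (np - (2:ℝ)⁻¹ • p.2)))
    · have inner : ContinuousOn (fun p : ℝ × E3 => mw1 p.1 (np - (2:ℝ)⁻¹ • p.2))
          ((Icc (0:ℝ) 1) ×ˢ S2) := by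
        apply contOn_mw1.comp reindexW2_cont.continuousOn
        intro p hp
        exact ⟨hp.1, coord_S2 hp.2⟩
      exact (continuousOn_const (c := (2:ℝ))).smul (continuousOn_const.sub inner)
    · exact fun p hp => KW1_S2 hp.1.1 hp.1.2 hp.2
  have hS3 : ContinuousOn KW1 ((Icc (0:ℝ) 1) ×ˢ S3) := by
    apply ContinuousOn.congr (f := fun p : ℝ × E3 =>
      (3:ℝ) • (np - dlT (np - (3:ℝ)⁻¹ • p.2)))
    · exact ((continuous_const (y := (3:ℝ))).smul (continuous_const.sub (continuous_dlT.comp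
        (continuous_const.sub ((continuous_const (y := (3:ℝ)⁻¹)).smul continuous_snd))))).continuousOn
    · exact fun p hp => KW1_S3 hp.2
  have hcover : DW = ((Icc (0:ℝ) 1) ×ˢ S1 ∪ (Icc (0:ℝ) 1) ×ˢ S2) ∪ (Icc (0:ℝ) 1) ×ˢ S3 := by
    unfold DW WS
    rw [Set.prod_union, Set.prod_union]
  rw [hcover]
  exact contOn_union
    (IsClosed.union (isClosed_Icc.prod isClosed_S1) (isClosed_Icc.prod isClosed_S2))
    (isClosed_Icc.prod isClosed_S3)
    (contOn_union (isClosed_Icc.prod isClosed_S1) (isClosed_Icc.prod isClosed_S2) hS1 hS2) hS3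

lemma contOn_KW2 : ContinuousOn KW2 DW := by
  have hS1 : ContinuousOn KW2 ((Icc (0:ℝ) 1) ×ˢ S1) :=
    ContinuousOn.congr continuous_snd.continuousOn (fun p hp => KW2_S1 hp.2)
  have hS2 : ContinuousOn KW2 ((Icc (0:ℝ) 1) ×ˢ S2) := by
    apply ContinuousOn.congr
      (f := fun p : ℝ × E3 => (2:ℝ) • (np - mw2 p.1 (np - (2:ℝ)⁻¹ • p.2)))
    · have inner : ContinuousOn (fun p : ℝ × E3 => mw2 p.1 (np - (2:ℝ)⁻¹ • p.2))
          ((Icc (0:ℝ) 1) ×ˢ S2) := by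
        apply contOn_mw2.comp reindexW2_cont.continuousOn
        intro p hp
        exact ⟨hp.1, coord_S2 hp.2⟩
      exact (continuousOn_const (c := (2:ℝ))).smul (continuousOn_const.sub inner)
    · exact fun p hp => KW2_S2 hp.1.1 hp.1.2 hp.2
  have hS3 : ContinuousOn KW2 ((Icc (0:ℝ) 1) ×ˢ S3) := by
    apply ContinuousOn.congr (f := fun p : ℝ × E3 =>
      (3:ℝ) • (np - geo dlT id p.1 (np - (3:ℝ)⁻¹ • p.2)))
    · have inner : ContinuousOn (fun p : ℝ × E3 => geo dlT id p.1 (np - (3:ℝ)⁻¹ • p.2))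
          ((Icc (0:ℝ) 1) ×ˢ S3) := by
        apply contOn_geo_dlT.comp reindexW3_cont.continuousOn
        intro p hp
        exact ⟨hp.1, coord_S3 hp.2⟩
      exact (continuousOn_const (c := (3:ℝ))).smul (continuousOn_const.sub inner)
    · exact fun p hp => KW2_S3 hp.1.1 hp.1.2 hp.2
  have hcover : DW = ((Icc (0:ℝ) 1) ×ˢ S1 ∪ (Icc (0:ℝ) 1) ×ˢ S2) ∪ (Icc (0:ℝ) 1) ×ˢ S3 := by
    unfold DW WS
    rw [Set.prod_union, Set.prod_union]
  rw [hcover]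
  exact contOn_union
    (IsClosed.union (isClosed_Icc.prod isClosed_S1) (isClosed_Icc.prod isClosed_S2))
    (isClosed_Icc.prod isClosed_S3)
    (contOn_union (isClosed_Icc.prod isClosed_S1) (isClosed_Icc.prod isClosed_S2) hS1 hS2) hS3

/-! Endpoints -/

lemma KW1_zero {w : E3} (hw : w ∈ WS) : KW1 (0, w) = F0 (G0 w) := by
  rcases hw with (h | h) | h
  · rw [KW1_S1 (p := (0, w)) h, FG_S1 h]
  · rw [KW1_S2 (p := (0, w)) le_rfl zero_le_one h, FG_S2 h]
    show (2:ℝ) • (np - mw1 0 (np - (2:ℝ)⁻¹ • w)) = _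
    rw [mw1_zero (coord_S2 h)]
  · rw [KW1_S3 (p := (0, w)) h, FG_S3 h]

lemma KW1_one_eq_KW2_zero {w : E3} (hw : w ∈ WS) : KW1 (1, w) = KW2 (0, w) := by
  rcases hw with (h | h) | h
  · rw [KW1_S1 (p := (1, w)) h, KW2_S1 (p := (0, w)) h]
  · rw [KW1_S2 (p := (1, w)) zero_le_one le_rfl h, KW2_S2 (p := (0, w)) le_rfl zero_le_one h]
    show (2:ℝ) • (np - mw1 1 (np - (2:ℝ)⁻¹ • w)) = (2:ℝ) • (np - mw2 0 (np - (2:ℝ)⁻¹ • w))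
    rw [mw1_one (coord_S2 h), mw2_zero (coord_S2 h)]
  · rw [KW1_S3 (p := (1, w)) h, KW2_S3 (p := (0, w)) le_rfl zero_le_one h]
    show (3:ℝ) • (np - dlT (np - (3:ℝ)⁻¹ • w)) = (3:ℝ) • (np - geo dlT id 0 (np - (3:ℝ)⁻¹ • w))
    rw [geo_zero (nsq_dlT (coord_S3 h))]

lemma KW2_one {w : E3} (hw : w ∈ WS) : KW2 (1, w) = w := by
  rcases hw with (h | h) | h
  · rw [KW2_S1 (p := (1, w)) h]
  · rw [KW2_S2 (p := (1, w)) zero_le_one le_rfl h]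
    show (2:ℝ) • (np - mw2 1 (np - (2:ℝ)⁻¹ • w)) = w
    rw [mw2_one (coord_S2 h), sub_sub_cancel, smul_smul]
    norm_num
  · rw [KW2_S3 (p := (1, w)) zero_le_one le_rfl h]
    show (3:ℝ) • (np - geo dlT id 1 (np - (3:ℝ)⁻¹ • w)) = w
    rw [geo_id_one (coord_S3 h), sub_sub_cancel, smul_smul]
    norm_num

end SpringerAux

namespace SpringerAux
open Set Metric Classical

/-! ### The continuous maps between the subspaces -/

noncomputable def Fc : C(↥X31, ↥WS) :=
  ⟨fun y => ⟨F0 y.1, F0_mem y.2⟩,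
    (contOn_F0.comp_continuous continuous_subtype_val fun y => y.2).subtype_mk _⟩

noncomputable def Gc : C(↥WS, ↥X31) :=
  ⟨fun w => ⟨G0 w.1, G0_mem w.2⟩,
    (contOn_G0.comp_continuous continuous_subtype_val fun w => w.2).subtype_mk _⟩

/-! ### The chain-side homotopy -/

noncomputable def HX1map : ↥unitInterval × ↥X31 → ↥X31 := fun p =>
  ⟨KX1 ((p.1 : ℝ), (p.2 : Fin 4 → E3)), KX1_mem ⟨p.1.2, p.2.2⟩⟩

noncomputable def HX2map : ↥unitInterval × ↥X31 → ↥X31 := fun p =>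
  ⟨KX2 ((p.1 : ℝ), (p.2 : Fin 4 → E3)), KX2_mem ⟨p.1.2, p.2.2⟩⟩

noncomputable def HX3map : ↥unitInterval × ↥X31 → ↥X31 := fun p =>
  ⟨KX3 ((p.1 : ℝ), (p.2 : Fin 4 → E3)), KX3_mem ⟨p.1.2, p.2.2⟩⟩

lemma pair_cont : Continuous (fun p : ↥unitInterval × ↥X31 =>
    (((p.1 : ℝ), (p.2 : Fin 4 → E3)) : ℝ × (Fin 4 → E3))) :=
  (continuous_subtype_val.comp continuous_fst).prodMk
    (continuous_subtype_val.comp continuous_snd)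

lemma contHX1 : Continuous HX1map :=
  (contOn_KX1.comp_continuous pair_cont fun p => ⟨p.1.2, p.2.2⟩).subtype_mk _

lemma contHX2 : Continuous HX2map :=
  (contOn_KX2.comp_continuous pair_cont fun p => ⟨p.1.2, p.2.2⟩).subtype_mk _

lemma contHX3 : Continuous HX3map :=
  (contOn_KX3.comp_continuous pair_cont fun p => ⟨p.1.2, p.2.2⟩).subtype_mk _

noncomputable def MX1 : C(↥X31, ↥X31) :=
  ⟨fun y => HX1map (1, y), contHX1.comp (continuous_const.prodMk continuous_id)⟩

noncomputable def MX2 : C(↥X31, ↥X31) :=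
  ⟨fun y => HX2map (1, y), contHX2.comp (continuous_const.prodMk continuous_id)⟩

noncomputable def HomX1 : (Gc.comp Fc).Homotopy MX1 where
  toFun := HX1map
  continuous_toFun := contHX1
  map_zero_left := fun y => by
    apply Subtype.ext
    exact KX1_zero y.2
  map_one_left := fun y => rfl

noncomputable def HomX2 : MX1.Homotopy MX2 where
  toFun := HX2map
  continuous_toFun := contHX2
  map_zero_left := fun y => by
    apply Subtype.ext
    exact (KX1_one_eq_KX2_zero y.2).symm
  map_one_left := fun y => rfl

noncomputable def HomX3 : MX2.Homotopy (ContinuousMap.id ↥X31) where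
  toFun := HX3map
  continuous_toFun := contHX3
  map_zero_left := fun y => by
    apply Subtype.ext
    exact (KX2_one_eq_KX3_zero y.2).symm
  map_one_left := fun y => by
    apply Subtype.ext
    exact KX3_one y.2

noncomputable def HomX : (Gc.comp Fc).Homotopy (ContinuousMap.id ↥X31) :=
  (HomX1.trans HomX2).trans HomX3

/-! ### The wedge-side homotopy -/

noncomputable def HW1map : ↥unitInterval × ↥WS → ↥WS := fun p =>
  ⟨KW1 ((p.1 : ℝ), (p.2 : E3)), KW1_mem ⟨p.1.2, p.2.2⟩⟩

noncomputable def HW2map : ↥unitInterval × ↥WS → ↥WS := fun p =>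
  ⟨KW2 ((p.1 : ℝ), (p.2 : E3)), KW2_mem ⟨p.1.2, p.2.2⟩⟩

lemma pairW_cont : Continuous (fun p : ↥unitInterval × ↥WS =>
    (((p.1 : ℝ), (p.2 : E3)) : ℝ × E3)) :=
  (continuous_subtype_val.comp continuous_fst).prodMk
    (continuous_subtype_val.comp continuous_snd)

lemma contHW1 : Continuous HW1map :=
  (contOn_KW1.comp_continuous pairW_cont fun p => ⟨p.1.2, p.2.2⟩).subtype_mk _

lemma contHW2 : Continuous HW2map :=
  (contOn_KW2.comp_continuous pairW_cont fun p => ⟨p.1.2, p.2.2⟩).subtype_mk _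

noncomputable def MW1 : C(↥WS, ↥WS) :=
  ⟨fun w => HW1map (1, w), contHW1.comp (continuous_const.prodMk continuous_id)⟩

noncomputable def HomW1 : (Fc.comp Gc).Homotopy MW1 where
  toFun := HW1map
  continuous_toFun := contHW1
  map_zero_left := fun w => by
    apply Subtype.ext
    exact KW1_zero w.2
  map_one_left := fun w => rfl

noncomputable def HomW2 : MW1.Homotopy (ContinuousMap.id ↥WS) where
  toFun := HW2map
  continuous_toFun := contHW2
  map_zero_left := fun w => by
    apply Subtype.ext
    exact (KW1_one_eq_KW2_zero w.2).symm
  map_one_left := fun w => by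
    apply Subtype.ext
    exact KW2_one w.2

noncomputable def HomW : (Fc.comp Gc).Homotopy (ContinuousMap.id ↥WS) :=
  HomW1.trans HomW2

noncomputable def HEquiv : ContinuousMap.HomotopyEquiv ↥X31 ↥WS :=
  ⟨Fc, Gc, ⟨HomX⟩, ⟨HomW⟩⟩

/-! ### The wedge quotient is homeomorphic to `WS` -/

def kf : Fin 3 → ℝ := ![1, 2, 3]

lemma kf_pos : ∀ i, 0 < kf i := by
  intro i
  match i with
  | ⟨0, _⟩ => norm_num [kf]
  | ⟨1, _⟩ => norm_num [kf]
  | ⟨2, _⟩ => norm_num [kf]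

lemma kf_ne_zero (i : Fin 3) : kf i ≠ 0 := (kf_pos i).ne'

lemma kf_inj : Function.Injective kf := by
  intro i j h
  match i, j with
  | ⟨0, _⟩, ⟨0, _⟩ => rfl
  | ⟨1, _⟩, ⟨1, _⟩ => rfl
  | ⟨2, _⟩, ⟨2, _⟩ => rfl
  | ⟨0, _⟩, ⟨1, _⟩ => norm_num [kf] at h
  | ⟨0, _⟩, ⟨2, _⟩ => norm_num [kf] at h
  | ⟨1, _⟩, ⟨0, _⟩ => norm_num [kf] at h
  | ⟨1, _⟩, ⟨2, _⟩ => norm_num [kf] at h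
  | ⟨2, _⟩, ⟨0, _⟩ => norm_num [kf] at h
  | ⟨2, _⟩, ⟨1, _⟩ => norm_num [kf] at h

abbrev Sph := ↥(Metric.sphere (0 : EuclideanSpace ℝ (Fin 3)) 1)

lemma sph_nsq (x : Sph) : nsq (x : E3) = 1 :=
  norm_eq_one_iff.1 (mem_sphere_zero_iff_norm.1 x.2)

lemma theta_mem (i : Fin 3) {x : E3} (hx : nsq x = 1) : kf i • (np - x) ∈ WS := by
  match i with
  | ⟨0, _⟩ =>
    apply mem_WS_S1
    rw [S1_eq]
    exact smul_np_mem one_pos hx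
  | ⟨1, _⟩ => exact mem_WS_S2 (smul_np_mem two_pos hx)
  | ⟨2, _⟩ => exact mem_WS_S3 (smul_np_mem three_pos hx)

noncomputable def theta0 : Fin 3 × Sph → ↥WS := fun z =>
  ⟨kf z.1 • (np - (z.2 : E3)), theta_mem z.1 (sph_nsq z.2)⟩

lemma theta0_resp : ∀ a b, wedgeRel a b → theta0 a = theta0 b := by
  rintro a b ⟨ha, hb⟩
  apply Subtype.ext
  show kf a.1 • (np - (a.2 : E3)) = kf b.1 • (np - (b.2 : E3))
  rw [ha, hb, sub_self, smul_zero, smul_zero]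

noncomputable def thetaq : WedgeThreeSpheres → ↥WS := Quot.lift theta0 theta0_resp

lemma continuous_thetaq : Continuous thetaq := by
  apply continuous_quot_lift
  apply Continuous.subtype_mk
  exact (continuous_of_discreteTopology (f := kf)).comp continuous_fst |>.smul
    (continuous_const.sub (continuous_subtype_val.comp continuous_snd))

lemma thetaq_inj : Function.Injective thetaq := by
  intro q q'
  induction q using Quot.ind with
  | _ z =>
  induction q' using Quot.ind with
  | _ z' =>
  intro h
  have hv : kf z.1 • (np - (z.2 : E3)) = kf z'.1 • (np - (z'.2 : E3)) :=
    congrArg Subtype.val h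
  by_cases hz : (z.2 : E3) = np
  · have h0 : kf z.1 • (np - (z.2 : E3)) = 0 := by rw [hz, sub_self, smul_zero]
    have h0' : kf z'.1 • (np - (z'.2 : E3)) = 0 := by rw [← hv, h0]
    have hz' : (z'.2 : E3) = np := by
      rcases smul_eq_zero.1 h0' with h' | h'
      · exact absurd h' (kf_ne_zero z'.1)
      · exact (sub_eq_zero.1 h').symm
    exact Quot.sound ⟨hz, hz'⟩
  · have hne0 : kf z.1 • (np - (z.2 : E3)) ≠ 0 := by
      intro h0
      rcases smul_eq_zero.1 h0 with h' | h'
      · exact kf_ne_zero z.1 h'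
      · exact hz (sub_eq_zero.1 h').symm
    have hmi : kf z.1 • (np - (z.2 : E3)) ∈ Metric.sphere (kf z.1 • np) (kf z.1) :=
      smul_np_mem (kf_pos z.1) (sph_nsq z.2)
    have hmj : kf z.1 • (np - (z.2 : E3)) ∈ Metric.sphere (kf z'.1 • np) (kf z'.1) := by
      rw [hv]
      exact smul_np_mem (kf_pos z'.1) (sph_nsq z'.2)
    have hij : z.1 = z'.1 := by
      by_contra hne'
      exact hne0 (sphere_inter_eq_zero (kf_pos z.1) (kf_pos z'.1)
        (fun he => hne' (kf_inj he)) hmi hmj)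
    have hxy : (z.2 : E3) = z'.2 := by
      rw [← hij] at hv
      have := smul_right_injective E3 (kf_ne_zero z.1) hv
      exact sub_right_injective this
    have hz2 : z.2 = z'.2 := Subtype.ext hxy
    have : z = z' := Prod.ext hij hz2
    rw [this]

lemma thetaq_surj : Function.Surjective thetaq := by
  intro w
  rcases w.2 with (h | h) | h
  · refine ⟨Quot.mk _ (⟨0, by norm_num⟩, ⟨np - w.1, ?_⟩), ?_⟩
    · rw [mem_sphere_zero_iff_norm]
      exact norm_eq_one_iff.2 (coord_S1 h)
    · apply Subtype.ext
      show kf 0 • (np - (np - w.1)) = w.1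
      rw [sub_sub_cancel]
      exact one_smul _ _
  · refine ⟨Quot.mk _ (⟨1, by norm_num⟩, ⟨np - (2:ℝ)⁻¹ • w.1, ?_⟩), ?_⟩
    · rw [mem_sphere_zero_iff_norm]
      exact norm_eq_one_iff.2 (coord_S2 h)
    · apply Subtype.ext
      show kf 1 • (np - (np - (2:ℝ)⁻¹ • w.1)) = w.1
      rw [sub_sub_cancel]
      show (2:ℝ) • ((2:ℝ)⁻¹ • w.1) = w.1
      rw [smul_smul]
      norm_num
  · refine ⟨Quot.mk _ (⟨2, by norm_num⟩, ⟨np - (3:ℝ)⁻¹ • w.1, ?_⟩), ?_⟩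
    · rw [mem_sphere_zero_iff_norm]
      exact norm_eq_one_iff.2 (coord_S3 h)
    · apply Subtype.ext
      show kf 2 • (np - (np - (3:ℝ)⁻¹ • w.1)) = w.1
      rw [sub_sub_cancel]
      show (3:ℝ) • ((3:ℝ)⁻¹ • w.1) = w.1
      rw [smul_smul]
      norm_num

noncomputable def thetaEquiv : WedgeThreeSpheres ≃ ↥WS :=
  Equiv.ofBijective thetaq ⟨thetaq_inj, thetaq_surj⟩

instance : CompactSpace WedgeThreeSpheres := by
  constructor
  rw [show (univ : Set WedgeThreeSpheres) = range (Quot.mk wedgeRel) from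
    (Quot.mk_surjective (r := wedgeRel)).range_eq.symm]
  exact isCompact_range continuous_quot_mk

noncomputable def thetaHomeo : WedgeThreeSpheres ≃ₜ ↥WS :=
  Continuous.homeoOfEquivCompactToT2 (f := thetaEquiv) continuous_thetaq

noncomputable def finalEquiv : ContinuousMap.HomotopyEquiv ↥X31 WedgeThreeSpheres :=
  HEquiv.trans thetaHomeo.symm.toHomotopyEquiv

end SpringerAux
/-- `X_{3,1}` is homotopy equivalent to a wedge of three 2-spheres; in particular the
pairwise intersections of its components are the indicated points. -/
theorem X31_wedge_of_three_spheres :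
    Sa ∩ Sb = {fun i => if i = 3 then np else -np} ∧
    Sb ∩ Sc = {fun i => if i = 0 then -np else np} ∧
    Sa ∩ Sc = ∅ ∧
    Nonempty (ContinuousMap.HomotopyEquiv (↥X31) WedgeThreeSpheres) :=
  ⟨SpringerAux.Sa_inter_Sb, SpringerAux.Sb_inter_Sc, SpringerAux.Sa_inter_Sc,
    ⟨SpringerAux.finalEquiv⟩⟩
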